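/- arXiv:1604.07354 — 3 statements merged into one kernel-verified Lean document; each statement's English description precedes it below -/
import Mathlib

section
/- Let A and B be bounded positive self-adjoint operators on a Hilbert space H such that 0 ≤ A ≤ λI and 0 ≤ B ≤ λI for some constant λ > 0. Then ‖A^{3/2} − B^{3/2}‖ ≤ 3 λ^{1/2} ‖A − B‖, where ‖·‖ is the operator norm. -/
open MeasureTheory Real Filter Set Topology

set_option maxHeartbeats 2000000
set_option synthInstance.maxHeartbeats 400000

namespace Stmt0Aux


lemma hasDeriv_aux {s : ℝ} (hs : 0 < s) (x : ℝ) :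
    HasDerivAt (fun u : ℝ => (Real.sqrt s)⁻¹ * Real.arctan (u / Real.sqrt s))
      ((s + x ^ 2)⁻¹) x := by
  have h0 : Real.sqrt s ≠ 0 := ne_of_gt (Real.sqrt_pos.mpr hs)
  have h1 : HasDerivAt (fun u : ℝ => u / Real.sqrt s) ((Real.sqrt s)⁻¹) x := by
    simpa [div_eq_mul_inv] using (hasDerivAt_id x).mul_const (Real.sqrt s)⁻¹
  have h2 := (Real.hasDerivAt_arctan (x / Real.sqrt s)).comp x h1
  have h3 := h2.const_mul (Real.sqrt s)⁻¹
  refine h3.congr_deriv ?_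
  symm
  have h5 : s + x ^ 2 > 0 := by positivity
  rw [div_pow, Real.sq_sqrt hs.le]
  have h4 : 1 + x ^ 2 / s = (s + x ^ 2) / s := by field_simp
  rw [h4]
  field_simp
  exact Real.sq_sqrt hs.le

lemma cont_aux {s : ℝ} (hs : 0 < s) :
    Continuous (fun u : ℝ => (Real.sqrt s)⁻¹ * Real.arctan (u / Real.sqrt s)) :=
  continuous_const.mul (Real.continuous_arctan.comp (continuous_id.div_const _))

lemma tendsto_aux {s : ℝ} (hs : 0 < s) :
    Tendsto (fun u : ℝ => (Real.sqrt s)⁻¹ * Real.arctan (u / Real.sqrt s)) atTop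
      (𝓝 ((Real.sqrt s)⁻¹ * (π / 2))) := by
  have h1 : Tendsto (fun u : ℝ => u / Real.sqrt s) atTop atTop :=
    tendsto_id.atTop_div_const (Real.sqrt_pos.mpr hs)
  exact ((Real.tendsto_arctan_atTop.mono_right nhdsWithin_le_nhds).comp h1).const_mul _

lemma integrableOn_aux {s : ℝ} (hs : 0 < s) :
    IntegrableOn (fun u : ℝ => (s + u ^ 2)⁻¹) (Ioi (0:ℝ)) :=
  integrableOn_Ioi_deriv_of_nonneg ((cont_aux hs).continuousWithinAt)
    (fun x _ => hasDeriv_aux hs x) (fun x _ => by positivity) (tendsto_aux hs)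

lemma integral_aux {s : ℝ} (hs : 0 < s) :
    ∫ u in Ioi (0:ℝ), (s + u ^ 2)⁻¹ = π / (2 * Real.sqrt s) := by
  have h0 : Real.sqrt s ≠ 0 := ne_of_gt (Real.sqrt_pos.mpr hs)
  rw [integral_Ioi_of_hasDerivAt_of_nonneg ((cont_aux hs).continuousWithinAt)
    (fun x _ => hasDeriv_aux hs x) (fun x _ => by positivity) (tendsto_aux hs)]
  simp only [zero_div, Real.arctan_zero, mul_zero, sub_zero]
  rw [inv_mul_eq_div, div_eq_div_iff (by positivity) (by positivity)]
  ring

lemma scalar_rep {s : ℝ} (hs : 0 ≤ s) :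
    ∫ u in Ioi (0:ℝ), 2 * (s ^ 2 * (s + u ^ 2)⁻¹) = π * s ^ (3/2 : ℝ) := by
  rcases hs.eq_or_lt with rfl | hs'
  · simp [Real.zero_rpow (by norm_num : (3/2:ℝ) ≠ 0)]
  · have h1 : (fun u : ℝ => 2 * (s ^ 2 * (s + u ^ 2)⁻¹))
        = fun u : ℝ => (2 * s ^ 2) * (s + u ^ 2)⁻¹ := by funext u; ring
    rw [h1, MeasureTheory.integral_const_mul, integral_aux hs']
    have h0 : Real.sqrt s ≠ 0 := ne_of_gt (Real.sqrt_pos.mpr hs')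
    have key : s ^ (3/2 : ℝ) * Real.sqrt s = s ^ 2 := by
      rw [Real.sqrt_eq_rpow, ← Real.rpow_add hs']
      norm_num
    field_simp
    nlinarith [key, Real.sqrt_pos.mpr hs', Real.pi_pos]


section Op


variable {H : Type*} [NormedAddCommGroup H] [InnerProductSpace ℂ H] [CompleteSpace H]

lemma spec_subset {A : H →L[ℂ] H} {lam : ℝ} (hlam : 0 ≤ lam) (hA : A.IsPositive)
    (hAlam : (lam • (1 : H →L[ℂ] H) - A).IsPositive) :
    spectrum ℝ A ⊆ Icc 0 lam := by
  have h0 : (0 : H →L[ℂ] H) ≤ A := (ContinuousLinearMap.nonneg_iff_isPositive A).mpr hA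
  have hle : A ≤ lam • (1 : H →L[ℂ] H) := hAlam
  have hup : ∀ x ∈ spectrum ℝ A, x ≤ lam := by
    rw [← le_algebraMap_iff_spectrum_le (a := A) hA.isSelfAdjoint,
      Algebra.algebraMap_eq_smul_one]
    exact hle
  intro x hx
  exact ⟨spectrum_nonneg_of_nonneg h0 hx, hup x hx⟩

variable {A B : H →L[ℂ] H} {lam c : ℝ}

lemma contOn_inv (hsp : spectrum ℝ A ⊆ Icc 0 lam) (hc : 0 < c) :
    ContinuousOn (fun s : ℝ => (s + c)⁻¹) (spectrum ℝ A) := by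
  apply ContinuousOn.inv₀ (by fun_prop)
  intro s hs
  have h1 := (hsp hs).1
  positivity

lemma cfc_linear (hA : IsSelfAdjoint A) :
    cfc (fun s : ℝ => s + c) A = A + c • (1 : H →L[ℂ] H) := by
  have h := cfc_add_const c (id : ℝ → ℝ) A (by fun_prop) hA
  simpa [cfc_id ℝ A hA, Algebra.algebraMap_eq_smul_one] using h

lemma Rinv_right (hA : IsSelfAdjoint A) (hsp : spectrum ℝ A ⊆ Icc 0 lam) (hc : 0 < c) :
    (A + c • (1 : H →L[ℂ] H)) * cfc (fun s : ℝ => (s + c)⁻¹) A = 1 := by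
  rw [← cfc_linear (c := c) hA, ← cfc_mul _ _ A (by fun_prop) (contOn_inv hsp hc)]
  have h2 : cfc (fun s : ℝ => (s + c) * (s + c)⁻¹) A = cfc (fun _ : ℝ => (1:ℝ)) A := by
    apply cfc_congr
    intro s hs
    have h1 := (hsp hs).1
    have : s + c > 0 := by positivity
    field_simp
  rw [h2, cfc_const_one ℝ A hA]

lemma Rinv_left (hA : IsSelfAdjoint A) (hsp : spectrum ℝ A ⊆ Icc 0 lam) (hc : 0 < c) :
    cfc (fun s : ℝ => (s + c)⁻¹) A * (A + c • (1 : H →L[ℂ] H)) = 1 := by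
  rw [← cfc_linear (c := c) hA, ← cfc_mul _ _ A (contOn_inv hsp hc) (by fun_prop)]
  have h2 : cfc (fun s : ℝ => (s + c)⁻¹ * (s + c)) A = cfc (fun _ : ℝ => (1:ℝ)) A := by
    apply cfc_congr
    intro s hs
    have h1 := (hsp hs).1
    have : s + c > 0 := by positivity
    field_simp
  rw [h2, cfc_const_one ℝ A hA]

lemma norm_R_le (hsp : spectrum ℝ A ⊆ Icc 0 lam) (hc : 0 < c) :
    ‖cfc (fun s : ℝ => (s + c)⁻¹) A‖ ≤ c⁻¹ := by
  refine norm_cfc_le (by positivity) fun s hs => ?_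
  have h1 := (hsp hs).1
  rw [Real.norm_eq_abs, abs_of_nonneg (by positivity)]
  exact inv_anti₀ hc (by linarith)

lemma norm_AR_le (hsp : spectrum ℝ A ⊆ Icc 0 lam) (hc : 0 < c) (hlam : 0 ≤ lam) :
    ‖cfc (fun s : ℝ => s * (s + c)⁻¹) A‖ ≤ lam * (lam + c)⁻¹ := by
  refine norm_cfc_le (by positivity) fun s hs => ?_
  obtain ⟨h1, h2⟩ := hsp hs
  rw [Real.norm_eq_abs, abs_of_nonneg (by positivity), ← div_eq_mul_inv, ← div_eq_mul_inv,
    div_le_div_iff₀ (by positivity) (by positivity)]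
  nlinarith


lemma cfc_g_eq (hA : IsSelfAdjoint A) (hsp : spectrum ℝ A ⊆ Icc 0 lam) (hc : 0 < c) :
    cfc (fun s : ℝ => 2 * (s ^ 2 * (s + c)⁻¹)) A
      = (2:ℝ) • (A ^ 2 * cfc (fun s : ℝ => (s + c)⁻¹) A) := by
  have hcont : ContinuousOn (fun s : ℝ => s ^ 2 * (s + c)⁻¹) (spectrum ℝ A) :=
    (by fun_prop : ContinuousOn (fun s : ℝ => s ^ 2) (spectrum ℝ A)).mul (contOn_inv hsp hc)
  rw [cfc_const_mul 2 _ A hcont,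
    cfc_mul _ _ A (by fun_prop) (contOn_inv hsp hc), cfc_pow_id A 2 hA]

lemma sq_mul_res (hA : IsSelfAdjoint A) (hsp : spectrum ℝ A ⊆ Icc 0 lam) (hc : 0 < c) :
    A ^ 2 * cfc (fun s : ℝ => (s + c)⁻¹) A
      = (A - c • 1) + (c * c) • cfc (fun s : ℝ => (s + c)⁻¹) A := by
  set R := cfc (fun s : ℝ => (s + c)⁻¹) A with hR
  have expand : (A - c • (1 : H →L[ℂ] H)) * (A + c • 1) + (c * c) • (1 : H →L[ℂ] H)
      = A ^ 2 := by
    simp only [mul_add, sub_mul, smul_mul_assoc, mul_smul_comm, mul_one, one_mul, sq]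
    module
  rw [← expand, add_mul, mul_assoc, Rinv_right hA hsp hc, mul_one, smul_mul_assoc, one_mul]

lemma diff_bound (hA : IsSelfAdjoint A) (hB : IsSelfAdjoint B)
    (hspA : spectrum ℝ A ⊆ Icc 0 lam) (hspB : spectrum ℝ B ⊆ Icc 0 lam)
    (hc : 0 < c) (hlam : 0 ≤ lam) :
    ‖cfc (fun s : ℝ => 2 * (s ^ 2 * (s + c)⁻¹)) A
        - cfc (fun s : ℝ => 2 * (s ^ 2 * (s + c)⁻¹)) B‖
      ≤ (6 * ‖A - B‖ * lam) * (lam + c)⁻¹ := by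
  set R := cfc (fun s : ℝ => (s + c)⁻¹) A with hRdef
  set S := cfc (fun s : ℝ => (s + c)⁻¹) B with hSdef
  have e1 := sq_mul_res hA hspA hc
  have e2 := sq_mul_res hB hspB hc
  have hAR : R * (A + c • 1) = 1 := Rinv_left hA hspA hc
  have hAR' : (A + c • 1) * R = 1 := Rinv_right hA hspA hc
  have hBS : S * (B + c • 1) = 1 := Rinv_left hB hspB hc
  have hBS' : (B + c • 1) * S = 1 := Rinv_right hB hspB hc
  have e3 : R - S = R * ((B - A) * S) := by
    have h1 : R * ((B + c • 1) * S) = R := by rw [hBS', mul_one]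
    have h2 : (R * (A + c • 1)) * S = S := by rw [hAR, one_mul]
    calc R - S = R * ((B + c • 1) * S) - (R * (A + c • 1)) * S := by rw [h1, h2]
    _ = R * ((B - A) * S) := by
        simp only [mul_add, add_mul, smul_mul_assoc, mul_smul_comm, one_mul, mul_one,
          mul_sub, sub_mul, mul_assoc]
        module
  have e4 : A ^ 2 * R - B ^ 2 * S = (A - B) + (c * c) • (R * ((B - A) * S)) := by
    rw [e1, e2, ← e3, smul_sub]
    module
  have e6 : (R * (A + c • 1)) * ((A - B) * ((B + c • 1) * S)) = A - B := by
    rw [hAR, hBS', one_mul, mul_one]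
  have e5 : (R * (A + c • 1)) * ((A - B) * ((B + c • 1) * S))
      = (R * A) * ((A - B) * (B * S)) + c • ((R * A) * ((A - B) * S))
        + c • (R * ((A - B) * (B * S))) + (c * c) • (R * ((A - B) * S)) := by
    simp only [mul_add, add_mul, smul_mul_assoc, mul_smul_comm, one_mul, mul_one,
      smul_smul, mul_assoc]
    module
  have e7 : (c * c) • (R * ((B - A) * S)) = -((c * c) • (R * ((A - B) * S))) := by
    rw [show B - A = -(A - B) from (neg_sub A B).symm]
    simp only [mul_neg, neg_mul, smul_neg]
  have e9 : A ^ 2 * R - B ^ 2 * S = (A - B) - (c * c) • (R * ((A - B) * S)) := by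
    rw [e4, e7]
    abel
  have e8 : A - B = (R * A) * ((A - B) * (B * S)) + c • ((R * A) * ((A - B) * S))
      + c • (R * ((A - B) * (B * S))) + (c * c) • (R * ((A - B) * S)) := e6.symm.trans e5
  have e10 := congrArg (fun X => X - (c * c) • (R * ((A - B) * S))) e8
  simp only [add_sub_cancel_right] at e10
  have key : A ^ 2 * R - B ^ 2 * S
      = (R * A) * ((A - B) * (B * S)) + c • ((R * A) * ((A - B) * S))
        + c • (R * ((A - B) * (B * S))) := e9.trans e10
  -- norm bounds
  have hRA : R * A = cfc (fun s : ℝ => s * (s + c)⁻¹) A := by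
    rw [show (fun s : ℝ => s * (s + c)⁻¹) = fun s : ℝ => (s + c)⁻¹ * s from
        funext fun s => mul_comm _ _,
      cfc_mul _ _ A (contOn_inv hspA hc) (by fun_prop), cfc_id' ℝ A hA]
  have hBS2 : B * S = cfc (fun s : ℝ => s * (s + c)⁻¹) B := by
    rw [cfc_mul _ _ B (by fun_prop) (contOn_inv hspB hc), cfc_id' ℝ B hB]
  set κ := lam * (lam + c)⁻¹ with hκ
  have nRA : ‖R * A‖ ≤ κ := by rw [hRA]; exact norm_AR_le hspA hc hlam
  have nBS : ‖B * S‖ ≤ κ := by rw [hBS2]; exact norm_AR_le hspB hc hlam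
  have nR : ‖R‖ ≤ c⁻¹ := norm_R_le hspA hc
  have nS : ‖S‖ ≤ c⁻¹ := norm_R_le hspB hc
  have hκ0 : 0 ≤ κ := by positivity
  have hκ1 : κ ≤ 1 := by
    rw [hκ, ← div_eq_mul_inv]
    apply div_le_one_of_le₀ <;> linarith
  set dn := ‖A - B‖ with hdn
  have hdn0 : 0 ≤ dn := norm_nonneg _
  have t1 : ‖(R * A) * ((A - B) * (B * S))‖ ≤ κ * (dn * κ) := by
    calc ‖(R * A) * ((A - B) * (B * S))‖ ≤ ‖R * A‖ * ‖(A - B) * (B * S)‖ := norm_mul_le _ _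
    _ ≤ ‖R * A‖ * (‖A - B‖ * ‖B * S‖) := by
        gcongr
        exact norm_mul_le _ _
    _ ≤ κ * (dn * κ) := by gcongr
  have t2 : ‖c • ((R * A) * ((A - B) * S))‖ ≤ c * (κ * (dn * c⁻¹)) := by
    rw [norm_smul, Real.norm_eq_abs, abs_of_nonneg hc.le]
    gcongr
    calc ‖(R * A) * ((A - B) * S)‖ ≤ ‖R * A‖ * ‖(A - B) * S‖ := norm_mul_le _ _
    _ ≤ ‖R * A‖ * (‖A - B‖ * ‖S‖) := by gcongr; exact norm_mul_le _ _
    _ ≤ κ * (dn * c⁻¹) := by gcongr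
  have t3 : ‖c • (R * ((A - B) * (B * S)))‖ ≤ c * (c⁻¹ * (dn * κ)) := by
    rw [norm_smul, Real.norm_eq_abs, abs_of_nonneg hc.le]
    gcongr
    calc ‖R * ((A - B) * (B * S))‖ ≤ ‖R‖ * ‖(A - B) * (B * S)‖ := norm_mul_le _ _
    _ ≤ ‖R‖ * (‖A - B‖ * ‖B * S‖) := by gcongr; exact norm_mul_le _ _
    _ ≤ c⁻¹ * (dn * κ) := by gcongr
  have hcinv : c * c⁻¹ = 1 := mul_inv_cancel₀ hc.ne'
  have main : ‖A ^ 2 * R - B ^ 2 * S‖ ≤ 3 * κ * dn := by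
    rw [key]
    calc ‖(R * A) * ((A - B) * (B * S)) + c • ((R * A) * ((A - B) * S))
          + c • (R * ((A - B) * (B * S)))‖
        ≤ ‖(R * A) * ((A - B) * (B * S)) + c • ((R * A) * ((A - B) * S))‖
          + ‖c • (R * ((A - B) * (B * S)))‖ := norm_add_le _ _
    _ ≤ ‖(R * A) * ((A - B) * (B * S))‖ + ‖c • ((R * A) * ((A - B) * S))‖
          + ‖c • (R * ((A - B) * (B * S)))‖ := by gcongr; exact norm_add_le _ _
    _ ≤ κ * (dn * κ) + c * (κ * (dn * c⁻¹)) + c * (c⁻¹ * (dn * κ)) := by gcongr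
    _ ≤ 3 * κ * dn := by
        have h1 : c * (κ * (dn * c⁻¹)) = κ * dn := by field_simp
        have h2 : c * (c⁻¹ * (dn * κ)) = dn * κ := by field_simp
        have h3 : κ * (dn * κ) ≤ κ * dn := by
          nlinarith [mul_nonneg (sub_nonneg.mpr hκ1) (mul_nonneg hκ0 hdn0)]
        rw [h1, h2]
        linarith
  rw [cfc_g_eq hA hspA hc, cfc_g_eq hB hspB hc, ← smul_sub, norm_smul, Real.norm_eq_abs,
    show |(2:ℝ)| = 2 by norm_num]
  calc 2 * ‖A ^ 2 * R - B ^ 2 * S‖ ≤ 2 * (3 * κ * dn) := by linarith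
  _ = (6 * dn * lam) * (lam + c)⁻¹ := by rw [hκ]; ring


lemma hbound_ptwise (hsp : spectrum ℝ A ⊆ Icc 0 lam) (hlam : 0 < lam) (u : ℝ) :
    ∀ s ∈ spectrum ℝ A, ‖2 * (s ^ 2 * (s + u ^ 2)⁻¹)‖ ≤ ‖2 * lam ^ 2 * (lam + u ^ 2)⁻¹‖ := by
  intro s hs
  obtain ⟨h1, h2⟩ := hsp hs
  have hR0 : (0:ℝ) < lam + u ^ 2 := by positivity
  rw [Real.norm_eq_abs, Real.norm_eq_abs, abs_of_nonneg (by positivity),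
    abs_of_nonneg (by positivity)]
  rcases eq_or_lt_of_le (by positivity : (0:ℝ) ≤ s + u ^ 2) with heq | hpos
  · have hs0 : s = 0 := by nlinarith [sq_nonneg u]
    rw [hs0]
    have hrhs : (0:ℝ) ≤ 2 * lam ^ 2 * (lam + u ^ 2)⁻¹ := by positivity
    simpa using hrhs
  · rw [mul_assoc, mul_le_mul_iff_of_pos_left (by norm_num : (0:ℝ) < 2), ← div_eq_mul_inv, ← div_eq_mul_inv,
      div_le_div_iff₀ hpos hR0]
    nlinarith [mul_nonneg (mul_nonneg (sub_nonneg.mpr h2) h1) hlam.le,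
      mul_nonneg (mul_nonneg (sub_nonneg.mpr h2) (by linarith : (0:ℝ) ≤ lam + s)) (sq_nonneg u)]

lemma huncurry_cont (hsp : spectrum ℝ A ⊆ Icc 0 lam) :
    Continuous (Function.uncurry
      fun (u : ℝ) => (spectrum ℝ A).restrict (fun s : ℝ => 2 * (s ^ 2 * (s + u ^ 2)⁻¹))) := by
  have hsp0 : ∀ z : spectrum ℝ A, (0:ℝ) ≤ (z : ℝ) := fun z => (hsp z.2).1
  rw [continuous_iff_continuousAt]
  rintro ⟨u, z⟩
  by_cases hz : (z : ℝ) + u ^ 2 = 0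
  · have hz0 : (z : ℝ) = 0 := by nlinarith [hsp0 z, sq_nonneg u]
    have hval : Function.uncurry
        (fun (u : ℝ) => (spectrum ℝ A).restrict (fun s : ℝ => 2 * (s ^ 2 * (s + u ^ 2)⁻¹)))
        (u, z) = 0 := by
      simp [Function.uncurry, Set.restrict, hz0]
    rw [ContinuousAt, hval]
    have hle : ∀ p : ℝ × spectrum ℝ A,
        Function.uncurry (fun (u : ℝ) => (spectrum ℝ A).restrict
          (fun s : ℝ => 2 * (s ^ 2 * (s + u ^ 2)⁻¹))) p ≤ 2 * (p.2 : ℝ) := by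
      rintro ⟨v, w⟩
      show 2 * ((w:ℝ) ^ 2 * ((w:ℝ) + v ^ 2)⁻¹) ≤ 2 * (w:ℝ)
      have hw0 := hsp0 w
      rcases eq_or_lt_of_le (by positivity : (0:ℝ) ≤ (w:ℝ) + v ^ 2) with heq | hpos
      · have hww : (w:ℝ) = 0 := by nlinarith [sq_nonneg v]
        rw [hww]
        simp
      · rw [mul_le_mul_iff_of_pos_left (by norm_num : (0:ℝ) < 2), ← div_eq_mul_inv,
          div_le_iff₀ hpos]
        nlinarith [mul_nonneg hw0 (sq_nonneg v)]
    have hge : ∀ p : ℝ × spectrum ℝ A,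
        (0:ℝ) ≤ Function.uncurry (fun (u : ℝ) => (spectrum ℝ A).restrict
          (fun s : ℝ => 2 * (s ^ 2 * (s + u ^ 2)⁻¹))) p := by
      rintro ⟨v, w⟩
      have hw0 := hsp0 w
      show (0:ℝ) ≤ 2 * ((w:ℝ) ^ 2 * ((w:ℝ) + v ^ 2)⁻¹)
      positivity
    refine tendsto_of_tendsto_of_tendsto_of_le_of_le (g := fun _ => (0:ℝ))
      (h := fun p : ℝ × spectrum ℝ A => 2 * (p.2 : ℝ)) tendsto_const_nhds ?_ hge hle
    have hcont : Continuous (fun p : ℝ × spectrum ℝ A => 2 * (p.2 : ℝ)) := by fun_prop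
    have := hcont.continuousAt (x := (u, z))
    rw [ContinuousAt] at this
    simpa [hz0] using this
  · apply ContinuousAt.mul continuousAt_const
    apply ContinuousAt.mul
    · fun_prop
    · exact ContinuousAt.inv₀ (by fun_prop) hz


lemma rep (hA : IsSelfAdjoint A) (hsp : spectrum ℝ A ⊆ Icc 0 lam) (hlam : 0 < lam) :
    π • cfc (fun x : ℝ => x ^ (3 / 2 : ℝ)) A
      = ∫ u in Ioi (0:ℝ), cfc (fun s : ℝ => 2 * (s ^ 2 * (s + u ^ 2)⁻¹)) A := by
  have hcont32 : ContinuousOn (fun x : ℝ => x ^ (3 / 2 : ℝ)) (spectrum ℝ A) :=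
    fun x _ => (Real.continuousAt_rpow_const x _ (Or.inr (by norm_num))).continuousWithinAt
  have hfin : HasFiniteIntegral (fun u : ℝ => 2 * lam ^ 2 * (lam + u ^ 2)⁻¹)
      (volume.restrict (Ioi (0:ℝ))) :=
    ((integrableOn_aux hlam).const_mul (2 * lam ^ 2)).hasFiniteIntegral
  have hfc : ContinuousOn (Function.uncurry (fun (u : ℝ) (s : ℝ) => 2 * (s ^ 2 * (s + u ^ 2)⁻¹)))
      (univ ×ˢ spectrum ℝ A) := by
    rw [continuousOn_iff_continuous_restrict]
    have hφ : Continuous (fun p : (univ ×ˢ spectrum ℝ A : Set (ℝ × ℝ)) =>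
        ((p : ℝ × ℝ).1, (⟨(p : ℝ × ℝ).2, p.2.2⟩ : spectrum ℝ A))) :=
      (continuous_fst.comp continuous_subtype_val).prodMk
        ((continuous_snd.comp continuous_subtype_val).subtype_mk _)
    exact (huncurry_cont hsp).comp hφ
  have key := cfc_integral (μ := volume.restrict (Ioi (0:ℝ)))
      (fun (u : ℝ) (s : ℝ) => 2 * (s ^ 2 * (s + u ^ 2)⁻¹))
      (fun u : ℝ => 2 * lam ^ 2 * (lam + u ^ 2)⁻¹) A
      hfc (ae_of_all _ fun u s hs => (hbound_ptwise hsp hlam u s hs).trans_eq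
        (Real.norm_of_nonneg (by positivity))) hfin hA
  rw [← key, ← cfc_const_mul π (fun x : ℝ => x ^ (3 / 2 : ℝ)) A hcont32]
  apply cfc_congr
  intro s hs
  exact (scalar_rep (hsp hs).1).symm

lemma integrable_cfc_g (hA : IsSelfAdjoint A) (hsp : spectrum ℝ A ⊆ Icc 0 lam)
    (hlam : 0 < lam) :
    Integrable (fun u : ℝ => cfc (fun s : ℝ => 2 * (s ^ 2 * (s + u ^ 2)⁻¹)) A)
      (volume.restrict (Ioi (0:ℝ))) := by
  have hcontOn : ∀ u : ℝ, ContinuousOn (fun s : ℝ => 2 * (s ^ 2 * (s + u ^ 2)⁻¹))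
      (spectrum ℝ A) := fun u =>
    continuousOn_iff_continuous_restrict.mpr ((huncurry_cont hsp).uncurry_left u)
  have hcontU : Continuous (fun u : ℝ =>
      cfc (fun s : ℝ => 2 * (s ^ 2 * (s + u ^ 2)⁻¹)) A) := by
    have h2 : Continuous (fun u : ℝ => cfcL (a := A) hA
        ((ContinuousMap.curry ⟨_, huncurry_cont hsp⟩) u)) :=
      (cfcL (a := A) hA).continuous.comp
        (ContinuousMap.continuous (ContinuousMap.curry ⟨_, huncurry_cont hsp⟩))
    refine h2.congr fun u => ?_
    rw [cfc_apply _ A hA (hcontOn u)]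
    rfl
  refine Integrable.mono' ((integrableOn_aux hlam).const_mul (2 * lam ^ 2))
    hcontU.aestronglyMeasurable (ae_of_all _ fun u => ?_)
  have h3 := norm_cfc_le (f := fun s : ℝ => 2 * (s ^ 2 * (s + u ^ 2)⁻¹)) (a := A)
    (c := 2 * lam ^ 2 * (lam + u ^ 2)⁻¹) (by positivity) (fun s hs => by
      have := hbound_ptwise hsp hlam u s hs
      rwa [Real.norm_eq_abs (2 * lam ^ 2 * (lam + u ^ 2)⁻¹),
        abs_of_nonneg (by positivity)] at this)
  exact h3

end Op
end Stmt0Aux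

open Stmt0Aux MeasureTheory Real Set

/-- Lemma 1 of the paper, from Fukumizu et al. 2007.
If `A` and `B` are bounded positive self-adjoint operators on a Hilbert space `H`
with `0 ≤ A ≤ λ·I` and `0 ≤ B ≤ λ·I` for a constant `λ > 0`, then
`‖A^{3/2} − B^{3/2}‖ ≤ 3 λ^{1/2} ‖A − B‖`, powers taken via the continuous
functional calculus. -/
theorem stmt0 {H : Type*} [NormedAddCommGroup H] [InnerProductSpace ℂ H] [CompleteSpace H]
    (A B : H →L[ℂ] H) (lam : ℝ) (hlam : 0 < lam)
    (hA : A.IsPositive) (hB : B.IsPositive)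
    (hAlam : (lam • (1 : H →L[ℂ] H) - A).IsPositive)
    (hBlam : (lam • (1 : H →L[ℂ] H) - B).IsPositive) :
    ‖cfc (fun x : ℝ => x ^ (3 / 2 : ℝ)) A - cfc (fun x : ℝ => x ^ (3 / 2 : ℝ)) B‖ ≤
      3 * lam ^ (1 / 2 : ℝ) * ‖A - B‖ := by
  have hAsa := hA.isSelfAdjoint
  have hBsa := hB.isSelfAdjoint
  have hspA := spec_subset hlam.le hA hAlam
  have hspB := spec_subset hlam.le hB hBlam
  have repA := rep hAsa hspA hlam
  have repB := rep hBsa hspB hlam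
  have intA := integrable_cfc_g hAsa hspA hlam
  have intB := integrable_cfc_g hBsa hspB hlam
  set X := cfc (fun x : ℝ => x ^ (3 / 2 : ℝ)) A - cfc (fun x : ℝ => x ^ (3 / 2 : ℝ)) B with hX
  have hsub : π • X = ∫ u in Ioi (0:ℝ),
      (cfc (fun s : ℝ => 2 * (s ^ 2 * (s + u ^ 2)⁻¹)) A
        - cfc (fun s : ℝ => 2 * (s ^ 2 * (s + u ^ 2)⁻¹)) B) := by
    rw [hX, smul_sub, repA, repB, ← integral_sub intA intB]
  have hInt : Integrable (fun u : ℝ => (6 * ‖A - B‖ * lam) * (lam + u ^ 2)⁻¹)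
      (volume.restrict (Ioi (0:ℝ))) := (integrableOn_aux hlam).const_mul _
  have hBnd : ∀ᵐ u ∂(volume.restrict (Ioi (0:ℝ))),
      ‖cfc (fun s : ℝ => 2 * (s ^ 2 * (s + u ^ 2)⁻¹)) A
        - cfc (fun s : ℝ => 2 * (s ^ 2 * (s + u ^ 2)⁻¹)) B‖
        ≤ (6 * ‖A - B‖ * lam) * (lam + u ^ 2)⁻¹ := by
    refine (ae_restrict_iff' measurableSet_Ioi).mpr (ae_of_all _ fun u hu => ?_)
    have hc : 0 < u ^ 2 := by
      have : (0:ℝ) < u := hu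
      positivity
    exact diff_bound hAsa hBsa hspA hspB hc hlam.le
  have hN := norm_integral_le_of_norm_le hInt hBnd
  rw [← hsub] at hN
  rw [MeasureTheory.integral_const_mul, integral_aux hlam] at hN
  rw [norm_smul, Real.norm_eq_abs, abs_of_nonneg pi_pos.le] at hN
  have hsq : Real.sqrt lam = lam ^ (1 / 2 : ℝ) := Real.sqrt_eq_rpow lam
  have hsq0 : 0 < Real.sqrt lam := Real.sqrt_pos.mpr hlam
  have hlam_eq : lam = Real.sqrt lam * Real.sqrt lam := (Real.mul_self_sqrt hlam.le).symm
  have hval : 6 * ‖A - B‖ * lam * (π / (2 * Real.sqrt lam))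
      = π * (3 * Real.sqrt lam * ‖A - B‖) := by
    have h := Real.mul_self_sqrt hlam.le
    field_simp
    linear_combination (6 * ‖A - B‖) * h.symm
  rw [hval] at hN
  have hfin : ‖X‖ ≤ 3 * Real.sqrt lam * ‖A - B‖ := le_of_mul_le_mul_left hN pi_pos
  rwa [hsq] at hfin
end

section
/- Let A and B be bounded positive self-adjoint operators on a Hilbert space H with 0 ≤ A ≤ λI and 0 ≤ B ≤ λI for some λ > 0, and let ε > 0. Then ‖(A + εI)^{-1/2} − (B + εI)^{-1/2}‖ ≤ ε^{-3/2} (3 ε^{-1/2} (λ + ε)^{1/2} + 1) ‖A − B‖. -/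
section auxiliary

variable {A : Type*} [CStarAlgebra A] [PartialOrder A] [StarOrderedRing A]

private lemma stmt3_smul_nonneg {c : ℝ} (hc : 0 ≤ c) {x : A} (hx : 0 ≤ x) :
    0 ≤ c • x := by
  have h := star_left_conjugate_nonneg hx ((Real.sqrt c) • (1 : A))
  have heq : star ((Real.sqrt c) • (1 : A)) * x * ((Real.sqrt c) • (1 : A)) = c • x := by
    rw [star_smul, star_trivial, star_one, smul_mul_assoc, smul_mul_assoc, one_mul,
      mul_smul_comm, mul_one, smul_smul, Real.mul_self_sqrt hc]
  rwa [heq] at h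

private lemma stmt3_smul_le_smul {c : ℝ} (hc : 0 ≤ c) {x y : A} (hxy : x ≤ y) :
    c • x ≤ c • y := by
  have := stmt3_smul_nonneg hc (sub_nonneg.mpr hxy)
  rw [smul_sub] at this
  exact sub_nonneg.mp this

private lemma stmt3_smul_le_smul_right {c d : ℝ} (hcd : c ≤ d) {x : A} (hx : 0 ≤ x) :
    c • x ≤ d • x := by
  have := stmt3_smul_nonneg (sub_nonneg.mpr hcd) hx
  rw [sub_smul] at this
  exact sub_nonneg.mp this

private lemma stmt3_alg {B : Type*} [Ring B] [Module ℝ B] [SMulCommClass ℝ B B]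
    [IsScalarTower ℝ B B] (D Z E h r : B) (c : ℝ) (hsyl : Z * D + D * Z = E + E)
    (hDh : D * h = c • h + r) (hhD : h * D = c • h + r) :
    h * (E + E) * h = (2 * c) • (h * Z * h) + (h * Z * r + r * Z * h) := by
  have e1 : h * (E + E) * h = h * Z * (D * h) + (h * D) * (Z * h) := by
    rw [← hsyl]; noncomm_ring
  rw [e1, hDh, hhD]
  rw [two_mul, add_smul, mul_add, add_mul]
  simp only [mul_smul_comm, smul_mul_assoc, mul_assoc]
  abel

private lemma stmt3_key_aux [Nontrivial A]
    {X Y : A} {δ : ℝ} (hδ : 0 < δ)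
    (hX : IsSelfAdjoint X) (hY : IsSelfAdjoint Y)
    (hXδ : algebraMap ℝ A δ ≤ X) (hYδ : algebraMap ℝ A δ ≤ Y)
    (hc : ‖X - Y‖ ∈ spectrum ℝ (X - Y)) :
    ‖X - Y‖ ≤ ‖X * X - Y * Y‖ / (2 * δ) := by
  have h01 : (0 : A) ≤ 1 := by simpa using star_mul_self_nonneg (1 : A)
  set D := X - Y with hD_def
  set Z := X + Y with hZ_def
  set E := X * X - Y * Y with hE_def
  set c := ‖D‖ with hc_def
  have hDsa : IsSelfAdjoint D := hX.sub hY
  have hZsa : IsSelfAdjoint Z := hX.add hY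
  have hEsa : IsSelfAdjoint E := by
    rw [IsSelfAdjoint, hE_def, star_sub, star_mul, star_mul, hX.star_eq, hY.star_eq]
  have hc0 : (0 : ℝ) ≤ c := norm_nonneg _
  have hZδ : algebraMap ℝ A (2 * δ) ≤ Z := by
    rw [two_mul, map_add]
    exact add_le_add hXδ hYδ
  have hsyl : Z * D + D * Z = E + E := by
    rw [hD_def, hZ_def, hE_def]; noncomm_ring
  have hmain : ∀ η : ℝ, 0 < η → 2 * δ * c ≤ ‖E‖ + η := by
    intro η hη
    set s : ℝ := η / (2 * ‖Z‖ + 1) with hs_def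
    have hs : 0 < s := by positivity
    set g : ℝ → ℝ := fun t => max 0 (min 1 ((t - (c - s)) / s)) with hg_def
    have hgcont : Continuous g :=
      continuous_const.max (continuous_const.min
        ((continuous_id.sub continuous_const).div_const _))
    have hg0 : ∀ t, 0 ≤ g t := fun t => le_max_left _ _
    have hg1 : ∀ t, g t ≤ 1 := fun t => max_le zero_le_one (min_le_left _ _)
    have hgc1 : g c = 1 := by
      show max 0 (min 1 ((c - (c - s)) / s)) = 1
      have h1 : (c - (c - s)) / s = 1 := by field_simp; ring
      rw [h1]
      norm_num
    set h := cfc g D with hh_def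
    have hh0 : (0 : A) ≤ h := cfc_nonneg (fun x _ => hg0 x)
    have hhsa : IsSelfAdjoint h := cfc_predicate g D
    have hh_norm : (1 : ℝ) ≤ ‖h‖ := by
      have := norm_apply_le_norm_cfc g D hc hgcont.continuousOn hDsa
      rwa [hgc1, norm_one] at this
    have hh_le1 : ‖h‖ ≤ 1 :=
      norm_cfc_le zero_le_one fun x _ => by
        rw [Real.norm_eq_abs, abs_of_nonneg (hg0 x)]; exact hg1 x
    set r := cfc (fun t : ℝ => (t - c) * g t) D with hr_def
    have hrsa : IsSelfAdjoint r := cfc_predicate _ D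
    have hr_norm : ‖r‖ ≤ s := by
      refine norm_cfc_le hs.le fun t ht => ?_
      have htc : t ≤ c := (Real.le_norm_self t).trans (spectrum.norm_le_norm_of_mem ht)
      by_cases hts : t ≤ c - s
      · have hgt : g t = 0 := by
          have h2 : (t - (c - s)) / s ≤ 0 :=
            div_nonpos_iff.mpr (Or.inr ⟨by linarith, hs.le⟩)
          simp only [hg_def]
          rw [max_eq_left (le_trans (min_le_right _ _) h2)]
        simp [hgt, hs.le]
      · push_neg at hts
        rw [Real.norm_eq_abs, abs_mul, abs_of_nonneg (hg0 t)]
        calc |t - c| * g t ≤ s * 1 := by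
              apply mul_le_mul _ (hg1 t) (hg0 t) hs.le
              rw [abs_of_nonpos (by linarith)]; linarith
          _ = s := mul_one s
    have h1 : cfc (fun t : ℝ => t * g t) D = cfc (fun t : ℝ => t) D * cfc g D :=
      cfc_mul (fun t : ℝ => t) g D continuous_id.continuousOn hgcont.continuousOn
    rw [cfc_id' ℝ D] at h1
    have h1' : cfc (fun t : ℝ => g t * t) D = cfc g D * cfc (fun t : ℝ => t) D :=
      cfc_mul g (fun t : ℝ => t) D hgcont.continuousOn continuous_id.continuousOn
    rw [cfc_id' ℝ D] at h1'
    have h2 : cfc (fun t : ℝ => c * g t + (t - c) * g t) D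
        = cfc (fun t : ℝ => c * g t) D + cfc (fun t : ℝ => (t - c) * g t) D :=
      cfc_add (a := D) _ _ ((continuous_const.mul hgcont).continuousOn)
        (((continuous_id.sub continuous_const).mul hgcont).continuousOn)
    have h3 : cfc (fun t : ℝ => c * g t) D = c • h :=
      cfc_const_mul c g D hgcont.continuousOn
    have hDh : D * h = c • h + r := by
      rw [← h1, ← h3, hr_def, ← h2]
      exact cfc_congr fun t _ => by ring
    have hhD : h * D = c • h + r := by
      rw [← h1', ← h3, hr_def, ← h2]
      exact cfc_congr fun t _ => by ring
    set w := h * Z * r + r * Z * h with hw_def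
    have hwsa : IsSelfAdjoint w := by
      rw [IsSelfAdjoint, hw_def, star_add, star_mul, star_mul, star_mul, star_mul,
        hhsa.star_eq, hZsa.star_eq, hrsa.star_eq]
      rw [mul_assoc, mul_assoc, add_comm]
    have hw_norm : ‖w‖ ≤ 2 * ‖Z‖ * s := by
      have hn1 : ‖h * Z * r‖ ≤ ‖Z‖ * s := by
        calc ‖h * Z * r‖ ≤ ‖h * Z‖ * ‖r‖ := norm_mul_le _ _
          _ ≤ ‖h‖ * ‖Z‖ * ‖r‖ :=
              mul_le_mul_of_nonneg_right (norm_mul_le _ _) (norm_nonneg _)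
          _ ≤ 1 * ‖Z‖ * s := by
              apply mul_le_mul _ hr_norm (norm_nonneg _) (by positivity)
              exact mul_le_mul_of_nonneg_right hh_le1 (norm_nonneg _)
          _ = ‖Z‖ * s := by ring
      have hn2 : ‖r * Z * h‖ ≤ ‖Z‖ * s := by
        calc ‖r * Z * h‖ ≤ ‖r * Z‖ * ‖h‖ := norm_mul_le _ _
          _ ≤ ‖r‖ * ‖Z‖ * ‖h‖ :=
              mul_le_mul_of_nonneg_right (norm_mul_le _ _) (norm_nonneg _)
          _ ≤ s * ‖Z‖ * 1 := by
              apply mul_le_mul _ hh_le1 (norm_nonneg _) (by positivity)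
              exact mul_le_mul_of_nonneg_right hr_norm (norm_nonneg _)
          _ = ‖Z‖ * s := by ring
      calc ‖w‖ ≤ ‖h * Z * r‖ + ‖r * Z * h‖ := norm_add_le _ _
        _ ≤ ‖Z‖ * s + ‖Z‖ * s := add_le_add hn1 hn2
        _ = 2 * ‖Z‖ * s := by ring
    have hidentity : h * (E + E) * h = (2 * c) • (h * Z * h) + w :=
      stmt3_alg D Z E h r c hsyl hDh hhD
    have hEh : h * E * h ≤ ‖E‖ • (h * h) := by
      have := CStarAlgebra.star_left_conjugate_le_norm_smul (a := h) (b := E) hEsa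
      rwa [hhsa.star_eq] at this
    have hEEh : h * (E + E) * h ≤ (2 * ‖E‖) • (h * h) := by
      calc h * (E + E) * h = h * E * h + h * E * h := by noncomm_ring
        _ ≤ ‖E‖ • (h * h) + ‖E‖ • (h * h) := add_le_add hEh hEh
        _ = (2 * ‖E‖) • (h * h) := by rw [two_mul, add_smul]
    have hZh_lower : (2 * δ) • (h * h) ≤ h * Z * h := by
      have hcc := star_left_conjugate_le_conjugate hZδ h
      rw [hhsa.star_eq] at hcc
      have heq : h * algebraMap ℝ A (2 * δ) * h = (2 * δ) • (h * h) := by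
        rw [Algebra.algebraMap_eq_smul_one, mul_smul_comm, mul_one, smul_mul_assoc]
      rw [heq] at hcc
      exact hcc
    have hwle : -w ≤ ‖w‖ • (1 : A) := by
      have := hwsa.neg.le_algebraMap_norm_self
      rwa [norm_neg, Algebra.algebraMap_eq_smul_one] at this
    have hkey1 : ((2 * c) * (2 * δ)) • (h * h)
        ≤ (2 * ‖E‖) • (h * h) + (2 * ‖Z‖ * s) • (1 : A) := by
      calc ((2 * c) * (2 * δ)) • (h * h) = (2 * c) • ((2 * δ) • (h * h)) := by
            rw [mul_smul]
        _ ≤ (2 * c) • (h * Z * h) := stmt3_smul_le_smul (by positivity) hZh_lower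
        _ = h * (E + E) * h - w := by rw [hidentity, add_sub_cancel_right]
        _ = h * (E + E) * h + -w := by rw [sub_eq_add_neg]
        _ ≤ (2 * ‖E‖) • (h * h) + ‖w‖ • (1 : A) := add_le_add hEEh hwle
        _ ≤ (2 * ‖E‖) • (h * h) + (2 * ‖Z‖ * s) • (1 : A) :=
            add_le_add le_rfl (stmt3_smul_le_smul_right hw_norm h01)
    have hhh : (0 : A) ≤ h * h := by
      have := star_mul_self_nonneg h
      rwa [hhsa.star_eq] at this
    have hfinal : ((2 * c) * (2 * δ) - 2 * ‖E‖) • (h * h) ≤ (2 * ‖Z‖ * s) • (1 : A) := by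
      rw [sub_smul, sub_le_iff_le_add, add_comm]
      exact hkey1
    have hsη : 2 * ‖Z‖ * s ≤ η := by
      have h0 : (0:ℝ) < 2 * ‖Z‖ + 1 := by positivity
      have h1 : s * (2 * ‖Z‖ + 1) = η := by rw [hs_def]; field_simp
      nlinarith [hs.le, norm_nonneg Z]
    by_cases hcase : (2 * c) * (2 * δ) ≤ 2 * ‖E‖
    · have h5 : (2 * c) * (2 * δ) = 4 * (δ * c) := by ring
      linarith
    · push_neg at hcase
      have hα : (0:ℝ) < (2 * c) * (2 * δ) - 2 * ‖E‖ := by linarith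
      have hle : ‖((2 * c) * (2 * δ) - 2 * ‖E‖) • (h * h)‖ ≤ ‖(2 * ‖Z‖ * s) • (1 : A)‖ :=
        CStarAlgebra.norm_le_norm_of_nonneg_of_le (stmt3_smul_nonneg hα.le hhh) hfinal
      rw [norm_smul, norm_smul, norm_one, mul_one] at hle
      have hhh_norm : ‖h * h‖ = ‖h‖ * ‖h‖ := by
        have := CStarRing.norm_star_mul_self (x := h)
        rwa [hhsa.star_eq] at this
      rw [hhh_norm, Real.norm_eq_abs, Real.norm_eq_abs, abs_of_pos hα,
        abs_of_nonneg (by positivity)] at hle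
      have h6 : (1:ℝ) ≤ ‖h‖ * ‖h‖ := by nlinarith [hh_norm]
      have h4 : (2 * c) * (2 * δ) - 2 * ‖E‖ ≤ ((2 * c) * (2 * δ) - 2 * ‖E‖) * (‖h‖ * ‖h‖) := by
        nlinarith [hα.le, h6]
      have h5 : (2 * c) * (2 * δ) = 4 * (δ * c) := by ring
      linarith
  have h2δc : 2 * δ * c ≤ ‖E‖ := by
    refine le_of_forall_pos_le_add fun η hη => hmain η hη
  rw [le_div_iff₀ (by positivity : (0:ℝ) < 2 * δ)]
  linarith

private lemma stmt3_key {X Y : A} {δ : ℝ} (hδ : 0 < δ)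
    (hX : IsSelfAdjoint X) (hY : IsSelfAdjoint Y)
    (hXδ : algebraMap ℝ A δ ≤ X) (hYδ : algebraMap ℝ A δ ≤ Y) :
    ‖X - Y‖ ≤ ‖X * X - Y * Y‖ / (2 * δ) := by
  obtain hA | hA := subsingleton_or_nontrivial A
  · have h0 : X - Y = 0 := Subsingleton.elim _ _
    rw [h0, norm_zero]
    positivity
  · rcases CStarAlgebra.norm_or_neg_norm_mem_spectrum (hX.sub hY) with hc | hc
    · exact stmt3_key_aux hδ hX hY hXδ hYδ hc
    · have h2 : ‖X - Y‖ ∈ -spectrum ℝ (X - Y) := Set.mem_neg.mpr hc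
      rw [spectrum.neg_eq, neg_sub] at h2
      rw [norm_sub_rev] at h2
      have h3 := stmt3_key_aux hδ hY hX hYδ hXδ h2
      rwa [norm_sub_rev Y X, norm_sub_rev (Y*Y) (X*X)] at h3

private lemma stmt3_sqrt_facts {S : A} {ε : ℝ} (hε : 0 < ε)
    (hSsa : IsSelfAdjoint S) (hSl : algebraMap ℝ A ε ≤ S) :
    cfc (fun x : ℝ => x ^ (1/2 : ℝ)) S * cfc (fun x : ℝ => x ^ (1/2 : ℝ)) S = S ∧
    IsSelfAdjoint (cfc (fun x : ℝ => x ^ (1/2 : ℝ)) S) ∧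
    algebraMap ℝ A (ε ^ (1/2 : ℝ)) ≤ cfc (fun x : ℝ => x ^ (1/2 : ℝ)) S ∧
    cfc (fun x : ℝ => (x ^ (1/2 : ℝ))⁻¹) S * cfc (fun x : ℝ => x ^ (1/2 : ℝ)) S = 1 ∧
    cfc (fun x : ℝ => x ^ (1/2 : ℝ)) S * cfc (fun x : ℝ => (x ^ (1/2 : ℝ))⁻¹) S = 1 ∧
    ‖cfc (fun x : ℝ => (x ^ (1/2 : ℝ))⁻¹) S‖ ≤ ε ^ (-(1/2) : ℝ) := by
  have hspecS : ∀ x ∈ spectrum ℝ S, ε ≤ x :=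
    (algebraMap_le_iff_le_spectrum (a := S) hSsa).mp hSl
  set f := fun x : ℝ => x ^ (1/2 : ℝ) with hf_def
  set finv := fun x : ℝ => (x ^ (1/2 : ℝ))⁻¹ with hfinv_def
  have hf_contS : ContinuousOn f (spectrum ℝ S) := fun x hx =>
    (Real.continuousAt_rpow_const x _ (Or.inl (hε.trans_le (hspecS x hx)).ne')).continuousWithinAt
  have hfinv_contS : ContinuousOn finv (spectrum ℝ S) :=
    hf_contS.inv₀ fun x hx => (Real.rpow_pos_of_pos (hε.trans_le (hspecS x hx)) _).ne'
  refine ⟨?_, cfc_predicate f S, ?_, ?_, ?_, ?_⟩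
  · have h1 : cfc (fun x : ℝ => f x * f x) S = cfc f S * cfc f S :=
      cfc_mul f f S hf_contS hf_contS
    rw [← h1]
    have h2 : (spectrum ℝ S).EqOn (fun x => f x * f x) id := fun x hx => by
      have hx0 : 0 < x := hε.trans_le (hspecS x hx)
      show f x * f x = x
      rw [hf_def, ← Real.rpow_add hx0]
      norm_num
    rw [cfc_congr h2, cfc_id ℝ S]
  · exact algebraMap_le_cfc f _ S fun x hx =>
      Real.rpow_le_rpow hε.le (hspecS x hx) (by norm_num)
  · have h1 : cfc (fun x : ℝ => finv x * f x) S = cfc finv S * cfc f S :=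
      cfc_mul finv f S hfinv_contS hf_contS
    rw [← h1]
    have h2 : (spectrum ℝ S).EqOn (fun x => finv x * f x) (fun _ => 1) := fun x hx => by
      have hx0 : 0 < x := hε.trans_le (hspecS x hx)
      exact inv_mul_cancel₀ (Real.rpow_pos_of_pos hx0 _).ne'
    rw [cfc_congr h2, cfc_const_one ℝ S]
  · have h1 : cfc (fun x : ℝ => f x * finv x) S = cfc f S * cfc finv S :=
      cfc_mul f finv S hf_contS hfinv_contS
    rw [← h1]
    have h2 : (spectrum ℝ S).EqOn (fun x => f x * finv x) (fun _ => 1) := fun x hx => by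
      have hx0 : 0 < x := hε.trans_le (hspecS x hx)
      exact mul_inv_cancel₀ (Real.rpow_pos_of_pos hx0 _).ne'
    rw [cfc_congr h2, cfc_const_one ℝ S]
  · refine norm_cfc_le (by positivity) fun x hx => ?_
    have hx0 : 0 < x := hε.trans_le (hspecS x hx)
    rw [Real.norm_eq_abs, abs_of_nonneg (by positivity), Real.rpow_neg hε.le]
    exact inv_anti₀ (Real.rpow_pos_of_pos hε _)
      (Real.rpow_le_rpow hε.le (hspecS x hx) (by norm_num))

end auxiliary

set_option maxHeartbeats 2000000 in
/-- perturbation bound for regularized inverse square roots, used in the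
proof of Theorem 2 of the paper. For bounded positive self-adjoint operators
`0 ≤ A ≤ λI`, `0 ≤ B ≤ λI` and `ε > 0`,
`‖(A + εI)^{-1/2} − (B + εI)^{-1/2}‖ ≤ ε^{-3/2}(3 ε^{-1/2}(λ + ε)^{1/2} + 1)‖A − B‖`,
where `(A + εI)^{-1/2} := ((A + εI)^{1/2})⁻¹` via the continuous functional calculus
(formalized with `Ring.inverse`). -/
theorem stmt3 {H : Type*} [NormedAddCommGroup H] [InnerProductSpace ℂ H] [CompleteSpace H]
    (A B : H →L[ℂ] H) (lam : ℝ) (hlam : 0 < lam)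
    (hA : A.IsPositive) (hB : B.IsPositive)
    (hAlam : (lam • (1 : H →L[ℂ] H) - A).IsPositive)
    (hBlam : (lam • (1 : H →L[ℂ] H) - B).IsPositive)
    (ε : ℝ) (hε : 0 < ε) :
    ‖Ring.inverse (cfc (fun x : ℝ => x ^ (1 / 2 : ℝ)) (A + ε • (1 : H →L[ℂ] H))) -
        Ring.inverse (cfc (fun x : ℝ => x ^ (1 / 2 : ℝ)) (B + ε • (1 : H →L[ℂ] H)))‖ ≤
      ε ^ (-(3 / 2) : ℝ) * (3 * ε ^ (-(1 / 2) : ℝ) * (lam + ε) ^ (1 / 2 : ℝ) + 1) *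
        ‖A - B‖ := by
  set S := A + ε • (1 : H →L[ℂ] H) with hS_def
  set T := B + ε • (1 : H →L[ℂ] H) with hT_def
  have hA' : (0 : H →L[ℂ] H) ≤ A := (ContinuousLinearMap.nonneg_iff_isPositive A).mpr hA
  have hB' : (0 : H →L[ℂ] H) ≤ B := (ContinuousLinearMap.nonneg_iff_isPositive B).mpr hB
  have hSl : algebraMap ℝ (H →L[ℂ] H) ε ≤ S := by
    rw [Algebra.algebraMap_eq_smul_one, ← sub_nonneg, hS_def, add_sub_cancel_right]
    exact hA'
  have hTl : algebraMap ℝ (H →L[ℂ] H) ε ≤ T := by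
    rw [Algebra.algebraMap_eq_smul_one, ← sub_nonneg, hT_def, add_sub_cancel_right]
    exact hB'
  have h01 : (0 : H →L[ℂ] H) ≤ 1 := by simpa using star_mul_self_nonneg (1 : H →L[ℂ] H)
  have halg0 : (0 : H →L[ℂ] H) ≤ algebraMap ℝ (H →L[ℂ] H) ε := by
    rw [Algebra.algebraMap_eq_smul_one]
    exact stmt3_smul_nonneg hε.le h01
  have hSsa : IsSelfAdjoint S := IsSelfAdjoint.of_nonneg (halg0.trans hSl)
  have hTsa : IsSelfAdjoint T := IsSelfAdjoint.of_nonneg (halg0.trans hTl)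
  obtain ⟨hXX, hXsa, hXl, hXiX, hXXi, hXi_norm⟩ := stmt3_sqrt_facts hε hSsa hSl
  obtain ⟨hYY, hYsa, hYl, hYiY, hYYi, hYi_norm⟩ := stmt3_sqrt_facts hε hTsa hTl
  set f := fun x : ℝ => x ^ (1/2 : ℝ) with hf_def
  set finv := fun x : ℝ => (x ^ (1/2 : ℝ))⁻¹ with hfinv_def
  set X := cfc f S with hX_def
  set Y := cfc f T with hY_def
  set Xi := cfc finv S with hXi_def
  set Yi := cfc finv T with hYi_def
  have hδ : (0:ℝ) < ε ^ (1/2 : ℝ) := Real.rpow_pos_of_pos hε _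
  -- the key estimate
  have hST : X * X - Y * Y = A - B := by
    rw [hXX, hYY, hS_def, hT_def]
    abel
  have hkey : ‖X - Y‖ ≤ ‖A - B‖ / (2 * ε ^ (1/2 : ℝ)) := by
    have := stmt3_key hδ hXsa hYsa hXl hYl
    rwa [hST] at this
  -- Ring.inverse identification
  have hRX : Ring.inverse X = Xi := by
    have : X = ((⟨X, Xi, hXXi, hXiX⟩ : (H →L[ℂ] H)ˣ) : H →L[ℂ] H) := rfl
    rw [this, Ring.inverse_unit]
    rfl
  have hRY : Ring.inverse Y = Yi := by
    have : Y = ((⟨Y, Yi, hYYi, hYiY⟩ : (H →L[ℂ] H)ˣ) : H →L[ℂ] H) := rfl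
    rw [this, Ring.inverse_unit]
    rfl
  have hdiff : Ring.inverse X - Ring.inverse Y = Xi * (Y - X) * Yi := by
    rw [hRX, hRY, mul_sub, sub_mul, mul_assoc Xi Y Yi, hYYi, mul_one, hXiX, one_mul]
  rw [hdiff]
  have hnorm1 : ‖Xi * (Y - X) * Yi‖ ≤ ‖Xi‖ * ‖Y - X‖ * ‖Yi‖ :=
    (norm_mul_le _ _).trans
      (mul_le_mul_of_nonneg_right (norm_mul_le _ _) (norm_nonneg _))
  have hnorm2 : ‖Xi‖ * ‖Y - X‖ * ‖Yi‖ ≤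
      ε ^ (-(1/2) : ℝ) * (‖A - B‖ / (2 * ε ^ (1/2 : ℝ))) * ε ^ (-(1/2) : ℝ) := by
    have hYX : ‖Y - X‖ = ‖X - Y‖ := norm_sub_rev _ _
    apply mul_le_mul
    · apply mul_le_mul hXi_norm (hYX ▸ hkey) (norm_nonneg _) (by positivity)
    · exact hYi_norm
    · exact norm_nonneg _
    · positivity
  -- final arithmetic
  have harij : ε ^ (-(1/2) : ℝ) * (‖A - B‖ / (2 * ε ^ (1/2 : ℝ))) * ε ^ (-(1/2) : ℝ) ≤
      ε ^ (-(3 / 2) : ℝ) * (3 * ε ^ (-(1 / 2) : ℝ) * (lam + ε) ^ (1 / 2 : ℝ) + 1) * ‖A - B‖ := by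
    set q := ε ^ (1/2 : ℝ) with hq_def
    set qi := ε ^ (-(1/2) : ℝ) with hqi_def
    set n := 3 * ε ^ (-(1 / 2) : ℝ) * (lam + ε) ^ (1 / 2 : ℝ) with hn_def
    have hq : qi = q⁻¹ := by rw [hqi_def, hq_def, ← Real.rpow_neg hε.le]
    have h32 : ε ^ (-(3/2) : ℝ) = qi * qi * qi := by
      rw [hqi_def, ← Real.rpow_add hε, ← Real.rpow_add hε]
      norm_num
    have hnn : (0:ℝ) ≤ n := by
      have h1 : (0:ℝ) ≤ (lam + ε) ^ (1 / 2 : ℝ) := Real.rpow_nonneg (by linarith) _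
      have h2 : (0:ℝ) ≤ ε ^ (-(1 / 2) : ℝ) := Real.rpow_nonneg hε.le _
      rw [hn_def]
      positivity
    have hqi : (0:ℝ) < qi := Real.rpow_pos_of_pos hε _
    have hAB : (0:ℝ) ≤ ‖A - B‖ := norm_nonneg _
    have e1 : qi * (‖A - B‖ / (2 * q)) * qi = qi * qi * qi * ‖A - B‖ / 2 := by
      rw [hq, div_eq_mul_inv, mul_inv, div_eq_mul_inv]
      ring
    rw [e1, h32]
    have e2 : qi * qi * qi * (n + 1) * ‖A - B‖ =
        qi * qi * qi * ‖A - B‖ + qi * qi * qi * n * ‖A - B‖ := by ring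
    rw [e2]
    have h3 : (0:ℝ) ≤ qi * qi * qi * ‖A - B‖ := by positivity
    have h4 : (0:ℝ) ≤ qi * qi * qi * n * ‖A - B‖ := by positivity
    linarith
  calc ‖Xi * (Y - X) * Yi‖ ≤ ‖Xi‖ * ‖Y - X‖ * ‖Yi‖ := hnorm1
    _ ≤ ε ^ (-(1/2) : ℝ) * (‖A - B‖ / (2 * ε ^ (1/2 : ℝ))) * ε ^ (-(1/2) : ℝ) := hnorm2
    _ ≤ _ := harij
end

section
/- Let H₁ and H₂ be Hilbert spaces, let λ > 0, M > 0 and ε > 0. Let A and Â be bounded positive self-adjoint operators on H₂ with 0 ≤ A ≤ λI and 0 ≤ Â ≤ λI, let B and B̂ be bounded positive self-adjoint operators on H₁ with 0 ≤ B ≤ λI and 0 ≤ B̂ ≤ λI, and let S, Ŝ : H₁ → H₂ be bounded operators with ‖S‖ ≤ M and ‖Ŝ‖ ≤ M. Then ‖(Â + εI)^{-1/2} Ŝ (B̂ + εI)^{-1/2} − (A + εI)^{-1/2} S (B + εI)^{-1/2}‖ ≤ M ε^{-2} (3 ε^{-1/2} (λ + ε)^{1/2} + 1) (‖Â − A‖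 + ‖B̂ − B‖) + ε^{-1} ‖Ŝ − S‖. -/
/-- The regularized inverse square root `(A + εI)^{-1/2} := ((A + εI)^{1/2})⁻¹` of a
bounded operator on a Hilbert space, with the square root given by the continuous
functional calculus and the inverse by `Ring.inverse`. -/
noncomputable def regInvSqrt {H : Type*} [NormedAddCommGroup H] [InnerProductSpace ℂ H]
    [CompleteSpace H] (A : H →L[ℂ] H) (ε : ℝ) : H →L[ℂ] H :=
  Ring.inverse (cfc (fun x : ℝ => x ^ (1 / 2 : ℝ)) (A + ε • (1 : H →L[ℂ] H)))


section Aux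

open ContinuousLinearMap RCLike
open scoped InnerProductSpace

variable {H : Type*} [NormedAddCommGroup H] [InnerProductSpace ℂ H] [CompleteSpace H]


omit [CompleteSpace H] in
lemma reinner_smul_vec (c : ℝ) (w v : H) : re ⟪c • w, v⟫_ℂ = c * re ⟪w, v⟫_ℂ := by
  rw [RCLike.real_smul_eq_coe_smul (K := ℂ), inner_smul_left]
  simp [conj_ofReal]


omit [CompleteSpace H] in
lemma reinner_symm (w v : H) : re ⟪w, v⟫_ℂ = re ⟪v, w⟫_ℂ := by
  rw [← inner_conj_symm, conj_re]

lemma reinner_smul_one (c : ℝ) (v : H) : re ⟪(c • (1:H→L[ℂ]H)) v, v⟫_ℂ = c * ‖v‖^2 := by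
  rw [smul_apply, one_apply_eq_self, reinner_smul_vec, inner_self_eq_norm_sq]

lemma sq_le_norm_smul_of_isPositive {P : H →L[ℂ] H} (hP : P.IsPositive) :
    P * P ≤ ‖P‖ • P := by
  rcases subsingleton_or_nontrivial H with hH | hH
  · have : Subsingleton (H →L[ℂ] H) :=
      ⟨fun a b => ContinuousLinearMap.ext fun x => Subsingleton.elim _ _⟩
    exact le_of_eq (Subsingleton.elim _ _)
  have h0 : (0:H→L[ℂ]H) ≤ P := (nonneg_iff_isPositive P).mpr hP
  have hid : P = cfc (fun x : ℝ => x) P := (cfc_id' ℝ P hP.isSelfAdjoint).symm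
  have hmm := cfc_mul (fun x : ℝ => x) (fun x : ℝ => x) P
    (continuous_id.continuousOn) (continuous_id.continuousOn)
  calc P * P = cfc (fun x : ℝ => x * x) P := by rw [hmm]; exact congrArg₂ _ hid hid
    _ ≤ cfc (fun x : ℝ => ‖P‖ * x) P := by
        refine cfc_mono (fun x hx => ?_) ((continuous_id.mul continuous_id).continuousOn)
          ((continuous_const.mul continuous_id).continuousOn)
        have h1 : 0 ≤ x := spectrum_nonneg_of_nonneg h0 hx
        have h2 : x ≤ ‖P‖ := (Real.le_norm_self x).trans (spectrum.norm_le_norm_of_mem hx)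
        exact mul_le_mul_of_nonneg_right h2 h1
    _ = ‖P‖ • P := cfc_const_mul_id ‖P‖ P hP.isSelfAdjoint

lemma norm_apply_sq_le_of_isPositive {P : H →L[ℂ] H} (hP : P.IsPositive) (v : H) :
    ‖P v‖ ^ 2 ≤ ‖P‖ * re ⟪P v, v⟫_ℂ := by
  have h := ((le_def _ _).mp (sq_le_norm_smul_of_isPositive hP)).re_inner_nonneg_left v
  have h1 : re ⟪(‖P‖ • P - P * P) v, v⟫_ℂ = ‖P‖ * re ⟪P v, v⟫_ℂ - re ⟪P (P v), v⟫_ℂ := by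
    rw [sub_apply, inner_sub_left, map_sub, smul_apply, reinner_smul_vec, mul_apply_eq_comp]
  have h3 : ⟪P (P v), v⟫_ℂ = ⟪P v, P v⟫_ℂ := hP.isSelfAdjoint.isSymmetric (P v) v
  have h2 : re ⟪P (P v), v⟫_ℂ = ‖P v‖ ^ 2 := by rw [h3]; exact inner_self_eq_norm_sq _
  rw [h1, h2] at h
  linarith

lemma anticomm_bound {Q F : H →L[ℂ] H} (hQ : IsSelfAdjoint Q) (hF : IsSelfAdjoint F)
    {μ β : ℝ} (hμ : 0 < μ) (hβ : 0 ≤ β)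
    (hQμ : (Q - μ • (1:H→L[ℂ]H)).IsPositive)
    (h : (β • (1:H→L[ℂ]H) - (Q * F + F * Q)).IsPositive) :
    ∀ x : H, re ⟪F x, x⟫_ℂ ≤ (β / (2 * μ)) * ‖x‖^2 := by
  have hc : 0 ≤ β / (2*μ) := div_nonneg hβ (by linarith)
  rcases subsingleton_or_nontrivial H with hH | hH
  · intro x
    have : x = 0 := Subsingleton.elim _ _
    simp [this, hc]
  -- the sup of the Rayleigh quotient
  set s : Set ℝ := (fun v : H => re ⟪F v, v⟫_ℂ) '' {v : H | ‖v‖ = 1} with hs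
  obtain ⟨v₀, hv₀⟩ : ∃ v : H, ‖v‖ = 1 := by
    obtain ⟨v, hv⟩ := NormedSpace.sphere_nonempty (E := H) (x := 0) (r := 1) |>.mpr zero_le_one
    exact ⟨v, by simpa [mem_sphere_iff_norm] using hv⟩
  have hne : s.Nonempty := ⟨_, ⟨v₀, hv₀, rfl⟩⟩
  have hbdd : BddAbove s := by
    refine ⟨‖F‖, ?_⟩
    rintro y ⟨v, hv, rfl⟩
    calc re ⟪F v, v⟫_ℂ ≤ ‖⟪F v, v⟫_ℂ‖ := re_le_norm _
      _ ≤ ‖F v‖ * ‖v‖ := norm_inner_le_norm _ _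
      _ ≤ ‖F‖ * ‖v‖ * ‖v‖ := by gcongr; exact F.le_opNorm v
      _ = ‖F‖ := by rw [Set.mem_setOf_eq] at hv; rw [hv]; ring
  set d := sSup s with hd
  have hdle : ∀ v : H, ‖v‖ = 1 → re ⟪F v, v⟫_ℂ ≤ d := fun v hv => le_csSup hbdd ⟨v, hv, rfl⟩
  have hquad : ∀ x : H, re ⟪F x, x⟫_ℂ ≤ d * ‖x‖^2 := by
    intro x
    by_cases hx : x = 0
    · simp [hx]
    · have hxn : (0:ℝ) < ‖x‖ := norm_pos_iff.mpr hx
      set v : H := ‖x‖⁻¹ • x with hv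
      have hvn : ‖v‖ = 1 := by
        rw [hv, norm_smul]
        simp [abs_of_pos (inv_pos.mpr hxn), inv_mul_cancel₀ hxn.ne']
      have hFv : F v = ‖x‖⁻¹ • F x := by rw [hv, map_smul_of_tower]
      have : re ⟪F v, v⟫_ℂ = ‖x‖⁻¹ * ‖x‖⁻¹ * re ⟪F x, x⟫_ℂ := by
        rw [hFv, hv, reinner_smul_vec, reinner_symm, reinner_smul_vec, reinner_symm]; ring
      have h2 := hdle v hvn
      rw [this] at h2
      have := mul_le_mul_of_nonneg_left h2 (le_of_lt (mul_pos hxn hxn))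
      calc re ⟪F x, x⟫_ℂ = (‖x‖ * ‖x‖) * (‖x‖⁻¹ * ‖x‖⁻¹ * re ⟪F x, x⟫_ℂ) := by
            field_simp
          _ ≤ (‖x‖ * ‖x‖) * d := this
          _ = d * ‖x‖^2 := by ring
  -- it suffices that d ≤ β/(2μ)
  suffices hdc : d ≤ β / (2*μ) by
    intro x
    calc re ⟪F x, x⟫_ℂ ≤ d * ‖x‖^2 := hquad x
      _ ≤ (β/(2*μ)) * ‖x‖^2 := mul_le_mul_of_nonneg_right hdc (sq_nonneg _)
  by_contra hcon
  push_neg at hcon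
  have hdpos : 0 < d := lt_of_le_of_lt hc hcon
  have hγ : 0 < 2*d*μ - β := by
    have := (div_lt_iff₀ (by linarith : (0:ℝ) < 2*μ)).mp hcon
    linarith
  set γ := 2*d*μ - β with hγdef
  set P := d • (1:H→L[ℂ]H) - F with hP
  have hPsa : IsSelfAdjoint P := ((IsSelfAdjoint.all d).smul (IsSelfAdjoint.one _)).sub hF
  have hPpos : P.IsPositive := by
    refine ⟨hPsa.isSymmetric, fun x => ?_⟩
    have : P.reApplyInnerSelf x = d * ‖x‖^2 - re ⟪F x, x⟫_ℂ := by
      rw [reApplyInnerSelf_apply, hP, sub_apply, inner_sub_left, map_sub, smul_apply, one_apply_eq_self,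
        reinner_smul_vec, inner_self_eq_norm_sq]
    rw [this]
    linarith [hquad x]
  set δ := (γ / (2*(‖Q‖+1)))^2 / (‖P‖+1) with hδ
  have hδpos : 0 < δ := by positivity
  obtain ⟨y, hy, hylt⟩ := exists_lt_of_lt_csSup hne (by linarith : d - δ < d)
  obtain ⟨v, hv1, rfl⟩ := hy
  rw [Set.mem_setOf_eq] at hv1
  -- small: re ⟪P v, v⟫ < δ
  have hPv : re ⟪P v, v⟫_ℂ < δ := by
    have : re ⟪P v, v⟫_ℂ = d * ‖v‖^2 - re ⟪F v, v⟫_ℂ := by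
      rw [hP, sub_apply, inner_sub_left, map_sub, smul_apply, one_apply_eq_self,
        reinner_smul_vec, inner_self_eq_norm_sq]
    rw [this, hv1]
    simp only [one_pow, mul_one]
    linarith
  have hPvsq : ‖P v‖^2 ≤ (γ / (2*(‖Q‖+1)))^2 := by
    calc ‖P v‖^2 ≤ ‖P‖ * re ⟪P v, v⟫_ℂ := norm_apply_sq_le_of_isPositive hPpos v
      _ ≤ (‖P‖+1) * δ := by
          have h0 := hPpos.re_inner_nonneg_left v
          nlinarith [norm_nonneg P]
      _ = (γ / (2*(‖Q‖+1)))^2 := by rw [hδ]; field_simp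
  have hPvle : ‖P v‖ ≤ γ / (2*(‖Q‖+1)) := by
    have h1 := Real.sqrt_le_sqrt hPvsq
    rwa [Real.sqrt_sq (norm_nonneg _), Real.sqrt_sq (by positivity)] at h1
  -- the anticommutator estimate
  have hβv : re ⟪(Q*F + F*Q) v, v⟫_ℂ ≤ β := by
    have h0 := h.re_inner_nonneg_left v
    have : re ⟪(β • (1:H→L[ℂ]H) - (Q*F + F*Q)) v, v⟫_ℂ
        = β * ‖v‖^2 - re ⟪(Q*F + F*Q) v, v⟫_ℂ := by
      rw [sub_apply, inner_sub_left, map_sub, smul_apply, one_apply_eq_self,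
        reinner_smul_vec, inner_self_eq_norm_sq]
    rw [this, hv1] at h0
    linarith
  have hsplit : re ⟪(Q*F + F*Q) v, v⟫_ℂ = 2 * re ⟪F v, Q v⟫_ℂ := by
    have e1 : ⟪(Q*F) v, v⟫_ℂ = ⟪F v, Q v⟫_ℂ := hQ.isSymmetric (F v) v
    have e2 : ⟪(F*Q) v, v⟫_ℂ = ⟪Q v, F v⟫_ℂ := hF.isSymmetric (Q v) v
    rw [add_apply, inner_add_left, map_add, e1, e2, reinner_symm (Q v) (F v)]
    ring
  have hFv_eq : F v = d • v - P v := by rw [hP]; simp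
  have hQv : μ ≤ re ⟪Q v, v⟫_ℂ := by
    have h0 := hQμ.re_inner_nonneg_left v
    have : re ⟪(Q - μ • (1:H→L[ℂ]H)) v, v⟫_ℂ = re ⟪Q v, v⟫_ℂ - μ * ‖v‖^2 := by
      rw [sub_apply, inner_sub_left, map_sub, smul_apply, one_apply_eq_self,
        reinner_smul_vec, inner_self_eq_norm_sq]
    rw [this, hv1] at h0
    linarith
  have hPQv : re ⟪P v, Q v⟫_ℂ ≤ ‖P v‖ * ‖Q‖ := by
    calc re ⟪P v, Q v⟫_ℂ ≤ ‖⟪P v, Q v⟫_ℂ‖ := re_le_norm _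
      _ ≤ ‖P v‖ * ‖Q v‖ := norm_inner_le_norm _ _
      _ ≤ ‖P v‖ * ‖Q‖ := by
          have := Q.le_opNorm v
          rw [hv1, mul_one] at this
          exact mul_le_mul_of_nonneg_left this (norm_nonneg _)
  have hFQv : d * μ - ‖P v‖ * ‖Q‖ ≤ re ⟪F v, Q v⟫_ℂ := by
    rw [hFv_eq, inner_sub_left, map_sub, reinner_smul_vec, reinner_symm v (Q v)]
    have := mul_le_mul_of_nonneg_left hQv hdpos.le
    linarith
  -- contradiction
  set q := ‖Q‖ with hq
  set c := γ / (2*(q+1)) with hcdef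
  have hq0 : (0:ℝ) ≤ q := norm_nonneg _
  have hcpos : 0 < c := by positivity
  have hceq : 2*(q+1)*c = γ := by rw [hcdef]; field_simp
  have hPvq : ‖P v‖ * q ≤ c * q := mul_le_mul_of_nonneg_right hPvle hq0
  nlinarith [hβv, hsplit, hFQv]


noncomputable def invSq (T : H →L[ℂ] H) : H →L[ℂ] H :=
  cfc (fun x : ℝ => x ^ (-(1/2) : ℝ)) T

lemma spec_lb {T : H →L[ℂ] H} {c : ℝ} (h : (T - c • (1:H→L[ℂ]H)).IsPositive) :
    ∀ x ∈ spectrum ℝ T, c ≤ x := by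
  intro x hx
  have h0 : (0:H→L[ℂ]H) ≤ T - c • 1 := (nonneg_iff_isPositive _).mpr h
  have hmem : x - c ∈ spectrum ℝ (T - algebraMap ℝ (H→L[ℂ]H) c) := by
    rw [← spectrum.sub_singleton_eq]
    exact Set.sub_mem_sub hx rfl
  have : (0:ℝ) ≤ x - c := by
    apply spectrum_nonneg_of_nonneg ?_ hmem
    rwa [Algebra.algebraMap_eq_smul_one]
  linarith

lemma spec_ub {T : H →L[ℂ] H} {c : ℝ} (h : (c • (1:H→L[ℂ]H) - T).IsPositive) :
    ∀ x ∈ spectrum ℝ T, x ≤ c := by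
  intro x hx
  have h0 : (0:H→L[ℂ]H) ≤ c • 1 - T := (nonneg_iff_isPositive _).mpr h
  have hmem : c - x ∈ spectrum ℝ (algebraMap ℝ (H→L[ℂ]H) c - T) := by
    rw [← spectrum.singleton_sub_eq]
    exact Set.sub_mem_sub rfl hx
  have : (0:ℝ) ≤ c - x := by
    apply spectrum_nonneg_of_nonneg ?_ hmem
    rwa [Algebra.algebraMap_eq_smul_one]
  linarith

section invSq

variable {T : H →L[ℂ] H} {ε lam : ℝ}

lemma invSq_sa (T : H →L[ℂ] H) : IsSelfAdjoint (invSq T) := cfc_predicate _ T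

lemma rpow_continuousOn (c : ℝ) (hT : IsSelfAdjoint T) (hε : 0 < ε)
    (hlo : ∀ x ∈ spectrum ℝ T, ε ≤ x) :
    ContinuousOn (fun x : ℝ => x ^ (c : ℝ)) (spectrum ℝ T) := fun x hx =>
  (Real.continuousAt_rpow_const x c
    (Or.inl (by have := hlo x hx; intro h; rw [h] at this; linarith))).continuousWithinAt

lemma regInvSqrt_eq (hT : IsSelfAdjoint T) (hε : 0 < ε)
    (hlo : ∀ x ∈ spectrum ℝ T, ε ≤ x) :
    Ring.inverse (cfc (fun x : ℝ => x ^ (1/2 : ℝ)) T) = invSq T := by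
  have hc1 := rpow_continuousOn (1/2 : ℝ) hT hε hlo
  have hc2 := rpow_continuousOn (-(1/2) : ℝ) hT hε hlo
  have hmul1 : cfc (fun x : ℝ => x ^ (1/2:ℝ)) T * invSq T = 1 := by
    rw [invSq, ← cfc_mul _ _ T hc1 hc2, ← cfc_one (R := ℝ) T]
    apply cfc_congr
    intro x hx
    have hx0 : 0 < x := lt_of_lt_of_le hε (hlo x hx)
    simp only
    rw [← Real.rpow_add hx0]
    norm_num
  have hmul2 : invSq T * cfc (fun x : ℝ => x ^ (1/2:ℝ)) T = 1 := by
    rw [invSq, ← cfc_mul _ _ T hc2 hc1, ← cfc_one (R := ℝ) T]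
    apply cfc_congr
    intro x hx
    have hx0 : 0 < x := lt_of_lt_of_le hε (hlo x hx)
    simp only
    rw [← Real.rpow_add hx0]
    norm_num
  let u : (H →L[ℂ] H)ˣ := ⟨cfc (fun x : ℝ => x ^ (1/2:ℝ)) T, invSq T, hmul1, hmul2⟩
  exact Ring.inverse_unit u

lemma norm_invSq_le (hT : IsSelfAdjoint T) (hε : 0 < ε)
    (hlo : ∀ x ∈ spectrum ℝ T, ε ≤ x) :
    ‖invSq T‖ ≤ ε ^ (-(1/2) : ℝ) := by
  apply norm_cfc_le (by positivity)
  intro x hx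
  have hx0 : ε ≤ x := hlo x hx
  rw [Real.norm_eq_abs, abs_of_nonneg (Real.rpow_nonneg (by linarith) _)]
  exact Real.rpow_le_rpow_of_nonpos hε hx0 (by norm_num)

lemma smul_one_le_invSq (hT : IsSelfAdjoint T) (hε : 0 < ε) (hlam : 0 < lam)
    (hlo : ∀ x ∈ spectrum ℝ T, ε ≤ x) (hhi : ∀ x ∈ spectrum ℝ T, x ≤ lam + ε) :
    ((lam + ε) ^ (-(1/2) : ℝ)) • (1:H→L[ℂ]H) ≤ invSq T := by
  have h1 : ((lam + ε) ^ (-(1/2) : ℝ)) • (1:H→L[ℂ]H)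
      = cfc (fun _ : ℝ => (lam + ε) ^ (-(1/2) : ℝ)) T := by
    rw [cfc_const _ T hT, Algebra.algebraMap_eq_smul_one]
  rw [h1, invSq]
  refine cfc_mono (fun x hx => ?_) (continuousOn_const) (rpow_continuousOn _ hT hε hlo)
  have hxlo := hlo x hx
  exact Real.rpow_le_rpow_of_nonpos (by linarith) (hhi x hx) (by norm_num)

lemma invSq_mul_invSq_mul (hT : IsSelfAdjoint T) (hε : 0 < ε)
    (hlo : ∀ x ∈ spectrum ℝ T, ε ≤ x) :
    invSq T * invSq T * T = 1 ∧ T * (invSq T * invSq T) = 1 := by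
  have hc2 := rpow_continuousOn (-(1/2) : ℝ) hT hε hlo
  have hsq : invSq T * invSq T = cfc (fun x : ℝ => x ^ (-(1:ℝ))) T := by
    rw [invSq, ← cfc_mul _ _ T hc2 hc2]
    apply cfc_congr
    intro x hx
    have hx0 : 0 < x := lt_of_lt_of_le hε (hlo x hx)
    simp only
    rw [← Real.rpow_add hx0]
    norm_num
  have hid : T = cfc (fun x : ℝ => x) T := (cfc_id' ℝ T hT).symm
  have hcid : ContinuousOn (fun x : ℝ => x) (spectrum ℝ T) := continuous_id.continuousOn
  have hcinv := rpow_continuousOn (-(1:ℝ)) hT hε hlo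
  constructor
  · rw [hsq]
    nth_rewrite 2 [hid]
    rw [← cfc_mul _ _ T hcinv hcid, ← cfc_one (R := ℝ) T]
    apply cfc_congr
    intro x hx
    have hx0 : 0 < x := lt_of_lt_of_le hε (hlo x hx)
    simp only
    rw [Real.rpow_neg_one]
    field_simp
    rfl
  · rw [hsq]
    nth_rewrite 1 [hid]
    rw [← cfc_mul _ _ T hcid hcinv, ← cfc_one (R := ℝ) T]
    apply cfc_congr
    intro x hx
    have hx0 : 0 < x := lt_of_lt_of_le hε (hlo x hx)
    simp only
    rw [Real.rpow_neg_one]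
    field_simp
    rfl

end invSq

lemma smul_one_isPositive {c : ℝ} (hc : 0 ≤ c) : ((c • (1:H→L[ℂ]H))).IsPositive := by
  refine ⟨((IsSelfAdjoint.all c).smul (IsSelfAdjoint.one _)).isSymmetric, fun x => ?_⟩
  rw [reApplyInnerSelf_apply, smul_apply, one_apply_eq_self, reinner_smul_vec, inner_self_eq_norm_sq]
  positivity

lemma norm_le_three_mul (E : H →L[ℂ] H) (hE : IsSelfAdjoint E) {c : ℝ} (hc : 0 ≤ c)
    (h1 : (c • (1:H→L[ℂ]H) - E).IsPositive)
    (h2 : (c • (1:H→L[ℂ]H) + E).IsPositive) : ‖E‖ ≤ 3 * c := by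
  have hEc0 : (0:H→L[ℂ]H) ≤ E + c • 1 := by
    rw [nonneg_iff_isPositive]
    rwa [add_comm] at h2
  have hEc2 : E + c • 1 ≤ algebraMap ℝ (H→L[ℂ]H) (2*c) := by
    rw [le_def, Algebra.algebraMap_eq_smul_one]
    have : (2*c) • (1:H→L[ℂ]H) - (E + c • 1) = c • 1 - E := by
      rw [two_mul, add_smul]; abel
    rwa [this]
  have hn : ‖E + c • 1‖ ≤ 2*c :=
    (CStarAlgebra.norm_le_iff_le_algebraMap (E + c • 1) (by positivity) hEc0).mpr hEc2
  have hone : ‖c • (1:H→L[ℂ]H)‖ ≤ c := by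
    rw [norm_smul, Real.norm_eq_abs, abs_of_nonneg hc]
    calc c * ‖(1:H→L[ℂ]H)‖ ≤ c * 1 := by
          apply mul_le_mul_of_nonneg_left _ hc
          rw [ContinuousLinearMap.one_def]
          exact norm_id_le
      _ = c := mul_one c
  calc ‖E‖ = ‖(E + c • 1) - c • 1‖ := by rw [add_sub_cancel_right]
    _ ≤ ‖E + c • 1‖ + ‖c • (1:H→L[ℂ]H)‖ := norm_sub_le _ _
    _ ≤ 2*c + c := add_le_add hn hone
    _ = 3*c := by ring


lemma anticomm_bound_pos {Q F : H →L[ℂ] H} (hQ : IsSelfAdjoint Q) (hF : IsSelfAdjoint F)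
    {μ β : ℝ} (hμ : 0 < μ) (hβ : 0 ≤ β)
    (hQμ : (Q - μ • (1:H→L[ℂ]H)).IsPositive)
    (h : (β • (1:H→L[ℂ]H) - (Q * F + F * Q)).IsPositive) :
    ((β / (2*μ)) • (1:H→L[ℂ]H) - F).IsPositive := by
  have key := anticomm_bound hQ hF hμ hβ hQμ h
  refine ⟨(((IsSelfAdjoint.all _).smul (IsSelfAdjoint.one _)).sub hF).isSymmetric, fun x => ?_⟩
  have : ((β / (2*μ)) • (1:H→L[ℂ]H) - F).reApplyInnerSelf x
      = (β/(2*μ)) * ‖x‖^2 - re ⟪F x, x⟫_ℂ := by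
    rw [reApplyInnerSelf_apply, sub_apply, inner_sub_left, map_sub, smul_apply, one_apply_eq_self,
      reinner_smul_vec, inner_self_eq_norm_sq]
  rw [this]
  linarith [key x]

lemma norm_diff_invSq_le {lam ε : ℝ} (hlam : 0 < lam) (hε : 0 < ε)
    (X Y : H →L[ℂ] H) (hX : IsSelfAdjoint X) (hY : IsSelfAdjoint Y)
    (hXlo : ∀ x ∈ spectrum ℝ X, ε ≤ x) (hXhi : ∀ x ∈ spectrum ℝ X, x ≤ lam + ε)
    (hYlo : ∀ x ∈ spectrum ℝ Y, ε ≤ x) (hYhi : ∀ x ∈ spectrum ℝ Y, x ≤ lam + ε) :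
    ‖invSq Y - invSq X‖
      ≤ 3 * ((ε ^ (-(1/2) : ℝ))^4 * ‖Y - X‖ / (2 * ((lam + ε) ^ (-(1/2) : ℝ)))) := by
  set ν : ℝ := ε ^ (-(1/2) : ℝ) with hν
  set μ : ℝ := (lam + ε) ^ (-(1/2) : ℝ) with hμdef
  have hν0 : 0 ≤ ν := Real.rpow_nonneg hε.le _
  have hμ0 : 0 < μ := Real.rpow_pos_of_pos (by linarith) _
  set P : H →L[ℂ] H := invSq Y with hPdef
  set Q : H →L[ℂ] H := invSq X with hQdef
  set β : ℝ := ν^4 * ‖Y - X‖ with hβdef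
  have hβ0 : 0 ≤ β := by positivity
  have hPsa : IsSelfAdjoint P := invSq_sa Y
  have hQsa : IsSelfAdjoint Q := invSq_sa X
  have hPn : ‖P‖ ≤ ν := norm_invSq_le hY hε hYlo
  have hQn : ‖Q‖ ≤ ν := norm_invSq_le hX hε hXlo
  have e1 : P * P * Y = 1 := (invSq_mul_invSq_mul hY hε hYlo).1
  have e2 : X * (Q * Q) = 1 := (invSq_mul_invSq_mul hX hε hXlo).2
  set R : H →L[ℂ] H := P * P - Q * Q with hRdef
  have hReq : R = P * P * ((X - Y) * (Q * Q)) := by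
    have expand : P * P * ((X - Y) * (Q * Q))
        = P * P * (X * (Q * Q)) - P * P * Y * (Q * Q) := by noncomm_ring
    rw [expand, e1, e2, mul_one, one_mul, hRdef]
  have hRsa : IsSelfAdjoint R := by
    have hPP : IsSelfAdjoint (P * P) := by
      rw [IsSelfAdjoint, star_mul, hPsa.star_eq]
    have hQQ : IsSelfAdjoint (Q * Q) := by
      rw [IsSelfAdjoint, star_mul, hQsa.star_eq]
    exact hPP.sub hQQ
  have hRn : ‖R‖ ≤ β := by
    calc ‖R‖ = ‖P * P * ((X - Y) * (Q * Q))‖ := by rw [hReq]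
      _ ≤ ‖P * P‖ * ‖(X - Y) * (Q * Q)‖ := norm_mul_le _ _
      _ ≤ (ν * ν) * (‖Y - X‖ * (ν * ν)) := by
          apply mul_le_mul
          · exact (norm_mul_le _ _).trans (mul_le_mul hPn hPn (norm_nonneg _) hν0)
          · refine (norm_mul_le _ _).trans ?_
            rw [norm_sub_rev]
            exact mul_le_mul le_rfl
              ((norm_mul_le _ _).trans (mul_le_mul hQn hQn (norm_nonneg _) hν0))
              (norm_nonneg _) (norm_nonneg _)
          · exact norm_nonneg _
          · positivity
      _ = β := by rw [hβdef]; ring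
  set E : H →L[ℂ] H := P - Q with hEdef
  have hEsa : IsSelfAdjoint E := hPsa.sub hQsa
  have hEE : (E * E).IsPositive := by
    rw [← nonneg_iff_isPositive]
    have := star_mul_self_nonneg E
    rwa [hEsa.star_eq] at this
  have hRleβ : R ≤ β • (1:H→L[ℂ]H) := by
    calc R ≤ algebraMap ℝ (H→L[ℂ]H) ‖R‖ := IsSelfAdjoint.le_algebraMap_norm_self hRsa
      _ ≤ β • 1 := by
        rw [Algebra.algebraMap_eq_smul_one, le_def, ← sub_smul]
        exact smul_one_isPositive (by linarith)
  have hRgeβ : -(β • (1:H→L[ℂ]H)) ≤ R := by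
    calc -(β • (1:H→L[ℂ]H)) ≤ -(algebraMap ℝ (H→L[ℂ]H) ‖R‖) := by
          rw [neg_le_neg_iff, Algebra.algebraMap_eq_smul_one, le_def, ← sub_smul]
          exact smul_one_isPositive (by linarith)
      _ ≤ R := IsSelfAdjoint.neg_algebraMap_norm_le_self hRsa
  have hQμ : (Q - μ • (1:H→L[ℂ]H)).IsPositive :=
    (le_def _ _).mp (smul_one_le_invSq hX hε hlam hXlo hXhi)
  have hPμ : (P - μ • (1:H→L[ℂ]H)).IsPositive :=
    (le_def _ _).mp (smul_one_le_invSq hY hε hlam hYlo hYhi)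
  -- upper bound : E ≤ (β/(2μ)) • 1
  have hup : ((β / (2*μ)) • (1:H→L[ℂ]H) - E).IsPositive := by
    apply anticomm_bound_pos hQsa hEsa hμ0 hβ0 hQμ
    have hiQ : Q * E + E * Q = R - E * E := by rw [hRdef, hEdef]; noncomm_ring
    have : β • (1:H→L[ℂ]H) - (Q * E + E * Q) = (β • 1 - R) + E * E := by
      rw [hiQ]; abel
    rw [this]
    exact ((le_def _ _).mp hRleβ).add hEE
  -- lower bound : -E ≤ (β/(2μ)) • 1
  have hlow : ((β / (2*μ)) • (1:H→L[ℂ]H) - (-E)).IsPositive := by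
    apply anticomm_bound_pos hPsa hEsa.neg hμ0 hβ0 hPμ
    have hiP : P * (-E) + (-E) * P = -(R + E * E) := by rw [hRdef, hEdef]; noncomm_ring
    have : β • (1:H→L[ℂ]H) - (P * (-E) + (-E) * P) = (β • 1 + R) + E * E := by
      rw [hiP]; abel
    rw [this]
    have h1 : ((β • (1:H→L[ℂ]H)) + R).IsPositive := by
      have := (le_def _ _).mp hRgeβ
      have e : R - -(β • (1:H→L[ℂ]H)) = β • 1 + R := by abel
      rwa [e] at this
    exact h1.add hEE
  have hfin := norm_le_three_mul E hEsa (by positivity : (0:ℝ) ≤ β / (2*μ)) hup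
    (by rwa [sub_neg_eq_add] at hlow)
  calc ‖E‖ ≤ 3 * (β / (2*μ)) := hfin
    _ = 3 * (ν^4 * ‖Y - X‖ / (2 * μ)) := by rw [hβdef]

lemma operator_setup {lam ε : ℝ} (hlam : 0 < lam) (hε : 0 < ε)
    (A : H →L[ℂ] H) (hA : A.IsPositive)
    (hAlam : (lam • (1 : H →L[ℂ] H) - A).IsPositive) :
    IsSelfAdjoint (A + ε • (1:H→L[ℂ]H))
    ∧ (∀ x ∈ spectrum ℝ (A + ε • (1:H→L[ℂ]H)), ε ≤ x)
    ∧ (∀ x ∈ spectrum ℝ (A + ε • (1:H→L[ℂ]H)), x ≤ lam + ε)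
    ∧ regInvSqrt A ε = invSq (A + ε • (1:H→L[ℂ]H)) := by
  have hsa : IsSelfAdjoint (A + ε • (1:H→L[ℂ]H)) :=
    hA.isSelfAdjoint.add ((IsSelfAdjoint.all ε).smul (IsSelfAdjoint.one _))
  have hlo : ∀ x ∈ spectrum ℝ (A + ε • (1:H→L[ℂ]H)), ε ≤ x := by
    apply spec_lb
    simpa using hA
  have hhi : ∀ x ∈ spectrum ℝ (A + ε • (1:H→L[ℂ]H)), x ≤ lam + ε := by
    apply spec_ub
    have : (lam + ε) • (1:H→L[ℂ]H) - (A + ε • 1) = lam • 1 - A := by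
      rw [add_smul]; abel
    rwa [this]
  exact ⟨hsa, hlo, hhi, regInvSqrt_eq hsa hε hlo⟩

end Aux

set_option maxHeartbeats 1000000

/-- the deterministic perturbation bound underlying Theorem 2 of the
paper. For `0 ≤ A, Â ≤ λI` on `H₂`, `0 ≤ B, B̂ ≤ λI` on `H₁`, bounded operators
`S, Ŝ : H₁ → H₂` with `‖S‖, ‖Ŝ‖ ≤ M`, and `ε > 0`:
`‖(Â + εI)^{-1/2} Ŝ (B̂ + εI)^{-1/2} − (A + εI)^{-1/2} S (B + εI)^{-1/2}‖
  ≤ M ε^{-2} (3 ε^{-1/2} (λ + ε)^{1/2} + 1)(‖Â − A‖ + ‖B̂ − B‖) + ε^{-1} ‖Ŝ − S‖`. -/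
theorem stmt5 {H₁ H₂ : Type*}
    [NormedAddCommGroup H₁] [InnerProductSpace ℂ H₁] [CompleteSpace H₁]
    [NormedAddCommGroup H₂] [InnerProductSpace ℂ H₂] [CompleteSpace H₂]
    (lam M ε : ℝ) (hlam : 0 < lam) (hM : 0 < M) (hε : 0 < ε)
    (A Ahat : H₂ →L[ℂ] H₂) (hA : A.IsPositive) (hAhat : Ahat.IsPositive)
    (hAlam : (lam • (1 : H₂ →L[ℂ] H₂) - A).IsPositive)
    (hAhatlam : (lam • (1 : H₂ →L[ℂ] H₂) - Ahat).IsPositive)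
    (B Bhat : H₁ →L[ℂ] H₁) (hB : B.IsPositive) (hBhat : Bhat.IsPositive)
    (hBlam : (lam • (1 : H₁ →L[ℂ] H₁) - B).IsPositive)
    (hBhatlam : (lam • (1 : H₁ →L[ℂ] H₁) - Bhat).IsPositive)
    (S Shat : H₁ →L[ℂ] H₂) (hS : ‖S‖ ≤ M) (hShat : ‖Shat‖ ≤ M) :
    ‖regInvSqrt Ahat ε ∘L Shat ∘L regInvSqrt Bhat ε -
        regInvSqrt A ε ∘L S ∘L regInvSqrt B ε‖ ≤
      M * ε ^ (-(2 : ℝ)) * (3 * ε ^ (-(1 / 2) : ℝ) * (lam + ε) ^ (1 / 2 : ℝ) + 1) *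
          (‖Ahat - A‖ + ‖Bhat - B‖) +
        ε⁻¹ * ‖Shat - S‖ := by
  classical
  obtain ⟨hsaA, hloA, hhiA, heqA⟩ := operator_setup hlam hε A hA hAlam
  obtain ⟨hsaAh, hloAh, hhiAh, heqAh⟩ := operator_setup hlam hε Ahat hAhat hAhatlam
  obtain ⟨hsaB, hloB, hhiB, heqB⟩ := operator_setup hlam hε B hB hBlam
  obtain ⟨hsaBh, hloBh, hhiBh, heqBh⟩ := operator_setup hlam hε Bhat hBhat hBhatlam
  rw [heqA, heqAh, heqB, heqBh]
  set ν : ℝ := ε ^ (-(1/2) : ℝ) with hν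
  set μ : ℝ := (lam + ε) ^ (-(1/2) : ℝ) with hμdef
  set w : ℝ := (lam + ε) ^ ((1:ℝ)/2) with hwdef
  set a : ℝ := ε ^ (-(2:ℝ)) with hadef
  have hν0 : 0 ≤ ν := Real.rpow_nonneg hε.le _
  have hw0 : 0 < w := Real.rpow_pos_of_pos (by linarith) _
  have ha0 : 0 ≤ a := Real.rpow_nonneg hε.le _
  have hμw : μ = w⁻¹ := by
    rw [hμdef, hwdef, ← Real.rpow_neg (by linarith : (0:ℝ) ≤ lam + ε)]
  have hν4 : ν^4 = a := by
    rw [hν, hadef, ← Real.rpow_natCast (ε ^ (-(1/2):ℝ)) 4, ← Real.rpow_mul hε.le]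
    norm_num
  have hν2 : ν * ν = ε⁻¹ := by
    rw [hν, ← Real.rpow_add hε]
    norm_num [Real.rpow_neg_one]
  set P₂ : H₂ →L[ℂ] H₂ := invSq (Ahat + ε • 1) with hP₂
  set Q₂ : H₂ →L[ℂ] H₂ := invSq (A + ε • 1) with hQ₂
  set P₁ : H₁ →L[ℂ] H₁ := invSq (Bhat + ε • 1) with hP₁
  set Q₁ : H₁ →L[ℂ] H₁ := invSq (B + ε • 1) with hQ₁
  have hP₁n : ‖P₁‖ ≤ ν := norm_invSq_le hsaBh hε hloBh
  have hQ₂n : ‖Q₂‖ ≤ ν := norm_invSq_le hsaA hε hloA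
  have hdA : ‖P₂ - Q₂‖ ≤ 3 * (a * ‖Ahat - A‖ * w / 2) := by
    have h := norm_diff_invSq_le hlam hε (A + ε • 1) (Ahat + ε • 1) hsaA hsaAh
      hloA hhiA hloAh hhiAh
    rw [← hν, ← hμdef] at h
    have hYX : (Ahat + ε • (1:H₂→L[ℂ]H₂)) - (A + ε • 1) = Ahat - A := by abel
    rw [hYX] at h
    refine h.trans (le_of_eq ?_)
    rw [hν4, hμw]
    field_simp
  have hdB : ‖P₁ - Q₁‖ ≤ 3 * (a * ‖Bhat - B‖ * w / 2) := by
    have h := norm_diff_invSq_le hlam hε (B + ε • 1) (Bhat + ε • 1) hsaB hsaBh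
      hloB hhiB hloBh hhiBh
    rw [← hν, ← hμdef] at h
    have hYX : (Bhat + ε • (1:H₁→L[ℂ]H₁)) - (B + ε • 1) = Bhat - B := by abel
    rw [hYX] at h
    refine h.trans (le_of_eq ?_)
    rw [hν4, hμw]
    field_simp
  have hdecomp : P₂ ∘L Shat ∘L P₁ - Q₂ ∘L S ∘L Q₁
      = (P₂ - Q₂) ∘L (Shat ∘L P₁) + Q₂ ∘L ((Shat - S) ∘L P₁)
        + Q₂ ∘L (S ∘L (P₁ - Q₁)) := by
    ext v
    simp only [ContinuousLinearMap.comp_apply, ContinuousLinearMap.sub_apply,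
      ContinuousLinearMap.add_apply, map_sub]
    abel
  have hstep1 : ‖P₂ ∘L Shat ∘L P₁ - Q₂ ∘L S ∘L Q₁‖
      ≤ ‖P₂ - Q₂‖ * (M * ν) + ν * (‖Shat - S‖ * ν) + ν * (M * ‖P₁ - Q₁‖) := by
    rw [hdecomp]
    refine (norm_add_le _ _).trans ?_
    have t1 : ‖(P₂ - Q₂) ∘L (Shat ∘L P₁)‖ ≤ ‖P₂ - Q₂‖ * (M * ν) := by
      refine (ContinuousLinearMap.opNorm_comp_le _ _).trans ?_
      refine mul_le_mul le_rfl ((ContinuousLinearMap.opNorm_comp_le _ _).trans ?_) (norm_nonneg _) (norm_nonneg _)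
      exact mul_le_mul hShat hP₁n (norm_nonneg _) (le_trans (norm_nonneg _) hShat)
    have t2 : ‖Q₂ ∘L ((Shat - S) ∘L P₁)‖ ≤ ν * (‖Shat - S‖ * ν) := by
      refine (ContinuousLinearMap.opNorm_comp_le _ _).trans ?_
      refine mul_le_mul hQ₂n ((ContinuousLinearMap.opNorm_comp_le _ _).trans ?_) (norm_nonneg _) hν0
      exact mul_le_mul le_rfl hP₁n (norm_nonneg _) (norm_nonneg _)
    have t3 : ‖Q₂ ∘L (S ∘L (P₁ - Q₁))‖ ≤ ν * (M * ‖P₁ - Q₁‖) := by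
      refine (ContinuousLinearMap.opNorm_comp_le _ _).trans ?_
      refine mul_le_mul hQ₂n ((ContinuousLinearMap.opNorm_comp_le _ _).trans ?_) (norm_nonneg _) hν0
      exact mul_le_mul hS le_rfl (norm_nonneg _) (le_trans (norm_nonneg _) hS)
    have := add_le_add (norm_add_le ((P₂ - Q₂) ∘L (Shat ∘L P₁)) (Q₂ ∘L ((Shat - S) ∘L P₁))) t3
    linarith [add_le_add (add_le_add t1 t2) t3,
      norm_add_le ((P₂ - Q₂) ∘L (Shat ∘L P₁)) (Q₂ ∘L ((Shat - S) ∘L P₁))]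
  have hstep2 : ‖P₂ - Q₂‖ * (M * ν) + ν * (‖Shat - S‖ * ν) + ν * (M * ‖P₁ - Q₁‖)
      ≤ M * a * (3 * ν * w + 1) * (‖Ahat - A‖ + ‖Bhat - B‖) + ε⁻¹ * ‖Shat - S‖ := by
    have hmid : ν * (‖Shat - S‖ * ν) = ε⁻¹ * ‖Shat - S‖ := by
      rw [← hν2]; ring
    rw [hmid]
    have hMν : 0 ≤ M * ν := mul_nonneg hM.le hν0
    have e1 : ‖P₂ - Q₂‖ * (M * ν) ≤ (3 * (a * ‖Ahat - A‖ * w / 2)) * (M * ν) :=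
      mul_le_mul_of_nonneg_right hdA hMν
    have e2 : ν * (M * ‖P₁ - Q₁‖) ≤ ν * (M * (3 * (a * ‖Bhat - B‖ * w / 2))) :=
      mul_le_mul_of_nonneg_left (mul_le_mul_of_nonneg_left hdB hM.le) hν0
    have hnA : (0:ℝ) ≤ ‖Ahat - A‖ := norm_nonneg _
    have hnB : (0:ℝ) ≤ ‖Bhat - B‖ := norm_nonneg _
    have key : (3 * (a * ‖Ahat - A‖ * w / 2)) * (M * ν) + ν * (M * (3 * (a * ‖Bhat - B‖ * w / 2)))
        ≤ M * a * (3 * ν * w + 1) * (‖Ahat - A‖ + ‖Bhat - B‖) := by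
      nlinarith [mul_nonneg (mul_nonneg (mul_nonneg (mul_nonneg hM.le ha0) hν0) hw0.le) hnA,
        mul_nonneg (mul_nonneg (mul_nonneg (mul_nonneg hM.le ha0) hν0) hw0.le) hnB,
        mul_nonneg (mul_nonneg hM.le ha0) hnA,
        mul_nonneg (mul_nonneg hM.le ha0) hnB]
    linarith
  calc ‖P₂ ∘L Shat ∘L P₁ - Q₂ ∘L S ∘L Q₁‖
      ≤ ‖P₂ - Q₂‖ * (M * ν) + ν * (‖Shat - S‖ * ν) + ν * (M * ‖P₁ - Q₁‖) := hstep1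
    _ ≤ M * a * (3 * ν * w + 1) * (‖Ahat - A‖ + ‖Bhat - B‖) + ε⁻¹ * ‖Shat - S‖ := hstep2
end
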